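/- arXiv:2008.02780 — 6 statements merged into one kernel-verified Lean document; each statement's English description precedes it below -/
import Mathlib

section
/- For any n ≥ k ≥ 1, every n-vertex graph with no path of length k (i.e., no path with k edges) has at most (k-1)n/2 edges. -/
open SimpleGraph Walk Finset

namespace EG

variable {V : Type*} {G : SimpleGraph V}

lemma getVert_eq_support_get {u v : V} (p : G.Walk u v) (n : ℕ) (hn : n ≤ p.length) :
    p.support[n]'(by rw [Walk.length_support]; omega) = p.getVert n := by
  induction p generalizing n with
  | nil =>
    obtain rfl : n = 0 := by simpa using hn
    simp
  | cons h q ih =>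
    cases n with
    | zero => simp
    | succ m =>
      simp only [Walk.support_cons, Walk.getVert_cons_succ, List.getElem_cons_succ]
      exact ih m (by simpa using hn)

lemma IsPath.getVert_injOn' {u v : V} {p : G.Walk u v} (hp : p.IsPath) {i j : ℕ}
    (hi : i ≤ p.length) (hj : j ≤ p.length) (h : p.getVert i = p.getVert j) : i = j := by
  rw [← getVert_eq_support_get p i hi, ← getVert_eq_support_get p j hj] at h
  exact (List.Nodup.getElem_inj_iff hp.support_nodup).mp h

lemma exists_path_len {u v : V} (p : G.Walk u v) (hp : p.IsPath) (m : ℕ) (hm : m ≤ p.length) :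
    ∃ (x y : V) (q : G.Walk x y), q.IsPath ∧ q.length = m := by
  induction p generalizing m with
  | nil => exact ⟨u, u, Walk.nil, by simp, by simpa using (Nat.le_zero.mp (by simpa using hm)).symm⟩
  | cons h q ih =>
    rcases Nat.lt_or_ge m (q.length + 1) with hlt | hge
    · exact ih (hp.of_cons) m (by omega)
    · refine ⟨_, _, _, hp, ?_⟩
      simp only [Walk.length_cons] at hm ⊢
      omega

variable [Fintype V] [DecidableEq V] [DecidableRel G.Adj]

lemma support_closed {u w : V} (p : G.Walk u w) (hp : p.IsPath)
    (hmax : ∀ (x y : V) (q : G.Walk x y), q.IsPath → q.length ≤ p.length)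
    (hdeg : p.length + 1 ≤ G.degree u + G.degree w) :
    ∀ x ∈ p.support, ∀ y, G.Adj x y → y ∈ p.support := by
  classical
  intro x hx y hxy
  by_contra hy
  set l := p.length with hl
  -- endpoints absorb their neighbors
  have hEndu : ∀ z, G.Adj u z → z ∈ p.support := by
    intro z hz
    by_contra hzs
    have hq : (Walk.cons hz.symm p).IsPath := (Walk.cons_isPath_iff _ _).mpr ⟨hp, hzs⟩
    have := hmax _ _ _ hq
    simp only [Walk.length_cons] at this
    omega
  have hEndw : ∀ z, G.Adj w z → z ∈ p.support := by
    intro z hz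
    by_contra hzs
    have hq : (Walk.cons hz.symm p.reverse).IsPath :=
      (Walk.cons_isPath_iff _ _).mpr ⟨hp.reverse, by simpa [Walk.support_reverse] using hzs⟩
    have := hmax _ _ _ hq
    simp only [Walk.length_cons, Walk.length_reverse] at this
    omega
  -- x is an interior vertex
  have hxu : x ≠ u := by rintro rfl; exact hy (hEndu y hxy)
  have hxw : x ≠ w := by rintro rfl; exact hy (hEndw y hxy)
  obtain ⟨jx, hjx, hjxl⟩ := Walk.mem_support_iff_exists_getVert.mp hx
  have hjx0 : jx ≠ 0 := by rintro rfl; rw [Walk.getVert_zero] at hjx; exact hxu hjx.symm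
  have hjxL : jx ≠ l := by rintro rfl; rw [Walk.getVert_length] at hjx; exact hxw hjx.symm
  have hl2 : 2 ≤ l := by omega
  -- pigeonhole: find i with u ~ p(i+1), w ~ p(i)
  have hA : ((Finset.range l).filter (fun i => G.Adj u (p.getVert (i+1)))).card
      = G.degree u := by
    rw [← card_neighborFinset_eq_degree]
    apply Finset.card_bij (fun i _ => p.getVert (i+1))
    · intro i hi
      simp only [mem_filter, mem_range] at hi
      simpa [mem_neighborFinset] using hi.2
    · intro i hi j hj hij
      simp only [mem_filter, mem_range] at hi hj
      have := IsPath.getVert_injOn' hp (by omega) (by omega) hij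
      omega
    · intro z hz
      rw [mem_neighborFinset] at hz
      obtain ⟨m, hm, hml⟩ := Walk.mem_support_iff_exists_getVert.mp (hEndu z hz)
      have hm0 : m ≠ 0 := by
        rintro rfl; rw [Walk.getVert_zero] at hm; exact (G.ne_of_adj hz) hm
      refine ⟨m - 1, ?_, by rw [(by omega : m - 1 + 1 = m), hm]⟩
      simp only [mem_filter, mem_range]
      rw [(by omega : m - 1 + 1 = m), hm]
      exact ⟨by omega, hz⟩
  have hB : ((Finset.range l).filter (fun i => G.Adj w (p.getVert i))).card
      = G.degree w := by
    rw [← card_neighborFinset_eq_degree]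
    apply Finset.card_bij (fun i _ => p.getVert i)
    · intro i hi
      simp only [mem_filter, mem_range] at hi
      simpa [mem_neighborFinset] using hi.2
    · intro i hi j hj hij
      simp only [mem_filter, mem_range] at hi hj
      exact IsPath.getVert_injOn' hp (by omega) (by omega) hij
    · intro z hz
      rw [mem_neighborFinset] at hz
      obtain ⟨m, hm, hml⟩ := Walk.mem_support_iff_exists_getVert.mp (hEndw z hz)
      have hmL : m ≠ l := by
        rintro rfl; rw [Walk.getVert_length] at hm; exact (G.ne_of_adj hz) hm
      refine ⟨m, ?_, hm⟩
      simp only [mem_filter, mem_range]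
      rw [hm]
      exact ⟨by omega, hz⟩
  obtain ⟨i, hi⟩ : ∃ i, i ∈ (Finset.range l).filter (fun i => G.Adj u (p.getVert (i+1)))
      ∧ i ∈ (Finset.range l).filter (fun i => G.Adj w (p.getVert i)) := by
    have hsub := Finset.union_subset
      (Finset.filter_subset (fun i => G.Adj u (p.getVert (i+1))) (Finset.range l))
      (Finset.filter_subset (fun i => G.Adj w (p.getVert i)) (Finset.range l))
    have hle := Finset.card_le_card hsub
    rw [Finset.card_range] at hle
    have hint := Finset.card_union_add_card_inter
      ((Finset.range l).filter (fun i => G.Adj u (p.getVert (i+1))))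
      ((Finset.range l).filter (fun i => G.Adj w (p.getVert i)))
    have hpos : 0 < (((Finset.range l).filter (fun i => G.Adj u (p.getVert (i+1)))) ∩
        ((Finset.range l).filter (fun i => G.Adj w (p.getVert i)))).card := by omega
    obtain ⟨i, hi⟩ := Finset.card_pos.mp hpos
    rw [Finset.mem_inter] at hi
    exact ⟨i, hi⟩
  simp only [mem_filter, mem_range] at hi
  obtain ⟨⟨hil, hub⟩, -, hwa⟩ := hi
  -- split the path at a := p.getVert i
  have ha : p.getVert i ∈ p.support :=
    Walk.mem_support_iff_exists_getVert.mpr ⟨i, rfl, by omega⟩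
  set r1 := p.takeUntil _ ha with hr1
  set r2 := p.dropUntil _ ha with hr2
  have hspec : r1.append r2 = p := p.take_spec ha
  have hr1le : r1.length ≤ l := p.length_takeUntil_le ha
  have hgvP : ∀ m, p.getVert m = (r1.append r2).getVert m := by
    intro m
    rw [hspec]
  have hr1len : r1.length = i := by
    have h1 : p.getVert r1.length = p.getVert i := by
      rw [hgvP, Walk.getVert_append]
      simp
    exact IsPath.getVert_injOn' hp hr1le (by omega) h1
  have hlensum : r1.length + r2.length = l := by
    have := congrArg Walk.length hspec
    rwa [Walk.length_append] at this
  have hr2len : r2.length = l - i := by omega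
  have hr2nil : ¬ r2.Nil := by
    rw [Walk.nil_iff_length_eq]
    omega
  -- getVert transfer lemmas
  have hgv2 : ∀ m, r2.getVert m = p.getVert (i + m) := by
    intro m
    rw [hgvP (i + m), Walk.getVert_append, hr1len, if_neg (by omega)]
    congr 1
    omega
  have hgv1 : ∀ m, m ≤ i → r1.getVert m = p.getVert m := by
    intro m hm
    rcases Nat.lt_or_ge m i with hlt | hge
    · rw [hgvP m, Walk.getVert_append, hr1len, if_pos (by omega)]
    · have hmi : m = i := by omega
      rw [hmi]
      exact Walk.getVert_of_length_le r1 (by omega)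
  -- decompose r2 = cons _ r2.tail
  have hcons : Walk.cons (r2.adj_snd hr2nil) r2.tail = r2 := r2.cons_tail_eq hr2nil
  have hb1 : r2.getVert 1 = p.getVert (i + 1) := hgv2 1
  have hr3len : r2.tail.length = l - i - 1 := by
    have := Walk.length_tail_add_one hr2nil
    omega
  have hgv3 : ∀ m, r2.tail.getVert m = p.getVert (i + 1 + m) := by
    intro m
    rw [Walk.getVert_tail r2, hgv2]
    congr 1
    omega
  -- paths
  have hr1path : r1.IsPath := hp.takeUntil ha
  have hr2path : r2.IsPath := hp.dropUntil ha
  have hr3path : r2.tail.IsPath := by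
    rw [← hcons] at hr2path
    exact hr2path.of_cons
  -- membership characterizations
  have hmem1 : ∀ z ∈ r1.support, ∃ m, m ≤ i ∧ p.getVert m = z := by
    intro z hz
    obtain ⟨m, hm, hml⟩ := Walk.mem_support_iff_exists_getVert.mp hz
    exact ⟨m, by omega, by rw [← hgv1 m (by omega), hm]⟩
  have hmem3 : ∀ z ∈ r2.tail.support, ∃ m, i + 1 ≤ m ∧ m ≤ l ∧ p.getVert m = z := by
    intro z hz
    obtain ⟨m, hm, hml⟩ := Walk.mem_support_iff_exists_getVert.mp hz
    exact ⟨i + 1 + m, by omega, by omega, by rw [← hgv3 m, hm]⟩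
  have hdisj13 : ∀ z, z ∈ r2.tail.support → z ∈ r1.support → False := by
    intro z hz3 hz1
    obtain ⟨m, hm1, hm2, hm3⟩ := hmem3 z hz3
    obtain ⟨m', hm'1, hm'2⟩ := hmem1 z hz1
    have : m = m' := IsPath.getVert_injOn' hp (by omega) (by omega) (by rw [hm3, hm'2])
    omega
  -- the cycle
  have hub' : G.Adj u (r2.getVert 1) := by rw [hb1]; exact hub
  set d : G.Walk (r2.getVert 1) u := r2.tail.append (Walk.cons hwa r1.reverse) with hd
  have hdsup : d.support = r2.tail.support ++ r1.reverse.support := by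
    rw [hd, Walk.support_append, Walk.support_cons, List.tail_cons]
  have hdpath : d.IsPath := by
    rw [Walk.isPath_def, hdsup]
    rw [List.nodup_append]
    refine ⟨hr3path.support_nodup, by simpa [Walk.support_reverse] using hr1path.support_nodup, ?_⟩
    intro z hz3 hz1 hb hzb
    rw [Walk.support_reverse, List.mem_reverse, ← hzb] at hb
    exact hdisj13 z hz3 hb
  have hedge : s(u, r2.getVert 1) ∉ d.edges := by
    intro he
    rw [hd, Walk.edges_append, List.mem_append] at he
    rcases he with he | he
    · have hus : u ∈ r2.tail.support := r2.tail.fst_mem_support_of_mem_edges he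
      obtain ⟨m, hm1, hm2, hm3⟩ := hmem3 u hus
      have : m = 0 := IsPath.getVert_injOn' hp (by omega) (by omega)
        (by rw [hm3, Walk.getVert_zero])
      omega
    · rw [Walk.edges_cons, List.mem_cons] at he
      rcases he with he | he
      · rw [Sym2.eq_iff] at he
        rcases he with ⟨h1, h2⟩ | ⟨h1, h2⟩
        · -- u = w
          have : (0 : ℕ) = l := IsPath.getVert_injOn' hp (by omega) (by omega)
            (by rw [Walk.getVert_zero, Walk.getVert_length, h1])
          omega
        · -- u = p.getVert i and p.getVert (i+1) = w
          have hi0 : (0 : ℕ) = i := IsPath.getVert_injOn' hp (by omega) (by omega)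
            (by rw [Walk.getVert_zero, ← h1])
          have hi1 : i + 1 = l := IsPath.getVert_injOn' hp (by omega) (by omega)
            (by rw [Walk.getVert_length, ← hb1, h2])
          omega
      · rw [Walk.edges_reverse, List.mem_reverse] at he
        have hbs : r2.getVert 1 ∈ r1.support := r1.snd_mem_support_of_mem_edges he
        obtain ⟨m, hm1, hm2⟩ := hmem1 _ hbs
        have : m = i + 1 := IsPath.getVert_injOn' hp (by omega) (by omega)
          (by rw [hm2, ← hb1])
        omega
  set c : G.Walk u u := Walk.cons hub' d with hc
  have hcyc : c.IsCycle := (Walk.cons_isCycle_iff d hub').mpr ⟨hdpath, hedge⟩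
  have hclen : c.length = l + 1 := by
    rw [hc, Walk.length_cons, hd, Walk.length_append, Walk.length_cons, Walk.length_reverse]
    omega
  -- support of c is support of p
  have hcsub : ∀ z, z ∈ c.support → z ∈ p.support := by
    intro z hz
    rw [hc, Walk.support_cons, List.mem_cons] at hz
    rcases hz with rfl | hz
    · exact p.start_mem_support
    · rw [hdsup, List.mem_append] at hz
      rcases hz with hz | hz
      · have : z ∈ r2.support := by
          rw [← hcons, Walk.support_cons, List.mem_cons]
          right
          exact hz
        exact p.support_dropUntil_subset ha this
      · rw [Walk.support_reverse, List.mem_reverse] at hz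
        exact p.support_takeUntil_subset ha hz
  have hpsub : ∀ z, z ∈ p.support → z ∈ c.support := by
    intro z hz
    rw [← hspec, Walk.mem_support_append_iff] at hz
    rw [hc, Walk.support_cons, List.mem_cons]
    rcases hz with hz | hz
    · right
      rw [hdsup, List.mem_append]
      right
      rw [Walk.support_reverse, List.mem_reverse]
      exact hz
    · rw [← hcons, Walk.support_cons, List.mem_cons] at hz
      rcases hz with rfl | hz
      · right
        rw [hdsup, List.mem_append]
        right
        rw [Walk.support_reverse, List.mem_reverse]
        exact r1.end_mem_support
      · right
        rw [hdsup, List.mem_append]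
        left
        exact hz
  -- rotate the cycle at x and extend by y
  have hxc : x ∈ c.support := hpsub x hx
  set c' : G.Walk x x := c.rotate x hxc with hc'
  have hc'cyc : c'.IsCycle := hcyc.rotate hxc
  have hc'len : c'.length = l + 1 := by
    rw [hc', Walk.rotate, Walk.length_append, Nat.add_comm, ← Walk.length_append, c.take_spec hxc]
    exact hclen
  have hc'nil : ¬ c'.Nil := by
    rw [Walk.nil_iff_length_eq]
    omega
  have hc'sub : ∀ z, z ∈ c'.support → z ∈ c.support := by
    intro z hz
    rw [Walk.support_eq_cons, List.mem_cons] at hz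
    rcases hz with rfl | hz
    · exact hxc
    · have := (Walk.support_rotate c x hxc).mem_iff.mp hz
      rw [Walk.support_eq_cons]
      exact List.mem_cons_of_mem _ this
  have hconsc' : Walk.cons (c'.adj_snd hc'nil) c'.tail = c' := c'.cons_tail_eq hc'nil
  have htpath : c'.tail.IsPath := by
    have := hc'cyc
    rw [← hconsc'] at this
    exact ((Walk.cons_isCycle_iff _ _).mp this).1
  have htlen : c'.tail.length = l := by
    have := Walk.length_tail_add_one hc'nil
    omega
  have hysup : y ∉ c'.tail.support := by
    intro hyz
    apply hy
    apply hcsub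
    apply hc'sub
    rw [← hconsc', Walk.support_cons, List.mem_cons]
    right
    exact hyz
  have hq : (c'.tail.concat hxy).IsPath := by
    rw [← Walk.isPath_reverse_iff, Walk.reverse_concat]
    rw [Walk.cons_isPath_iff]
    exact ⟨htpath.reverse, by rw [Walk.support_reverse, List.mem_reverse]; exact hysup⟩
  have := hmax _ _ _ hq
  rw [Walk.length_concat, htlen] at this
  omega


lemma no_path_induce (k : ℕ) (s : Set V)
    (hpath : ∀ (a b : V) (q : G.Walk a b), q.IsPath → q.length ≠ k) :
    ∀ (a b : s) (q : (G.induce s).Walk a b), q.IsPath → q.length ≠ k := by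
  intro a b q hq hlen
  exact hpath _ _ (q.map (SimpleGraph.Embedding.induce (G := G) s).toHom)
    (Walk.map_isPath_of_injective (SimpleGraph.Embedding.induce (G := G) s).injective hq)
    (by rwa [Walk.length_map])

lemma degree_induce_filter (s : Set V) [DecidablePred (· ∈ s)]
    [DecidableRel (G.induce s).Adj] (x : s) :
    (G.induce s).degree x = ((G.neighborFinset (x : V)).filter (· ∈ s)).card := by
  rw [← card_neighborFinset_eq_degree]
  apply Finset.card_bij (fun (y : s) _ => (y : V))
  · intro y hy
    rw [mem_neighborFinset] at hy
    simp only [comap_adj, Function.Embedding.coe_subtype] at hy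
    simp only [mem_filter, mem_neighborFinset]
    exact ⟨hy, y.2⟩
  · intro y _ z _ hyz
    exact Subtype.ext hyz
  · intro z hz
    simp only [mem_filter, mem_neighborFinset] at hz
    refine ⟨⟨z, hz.2⟩, ?_, rfl⟩
    rw [mem_neighborFinset]
    simp only [comap_adj, Function.Embedding.coe_subtype]
    exact hz.1

end EG

universe u

open SimpleGraph Walk Finset EG in
lemma EG.aux (k : ℕ) (hk : 1 ≤ k) (n : ℕ) :
    ∀ {V : Type u} [Fintype V] [DecidableEq V] (G : SimpleGraph V) [DecidableRel G.Adj],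
      Fintype.card V = n →
      (∀ (a b : V) (p : G.Walk a b), p.IsPath → p.length ≠ k) →
      ∑ v, G.degree v ≤ (k - 1) * n := by
  induction n using Nat.strong_induction_on with
  | _ n ih =>
  intro V _ _ G _ hn hpath
  classical
  by_cases hnk : n ≤ k
  · calc ∑ v, G.degree v ≤ ∑ _v : V, (k - 1) := by
          apply Finset.sum_le_sum
          intro v _
          have := G.degree_lt_card_verts v
          omega
      _ = (k - 1) * n := by
          rw [Finset.sum_const, Finset.card_univ, hn, smul_eq_mul, mul_comm]
  · push_neg at hnk
    by_cases hmin : ∀ v : V, k ≤ 2 * G.degree v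
    · -- min degree ≥ k/2 : take a maximum-length path, its support is a closed set
      have hV : Nonempty V := by
        rw [← Fintype.card_pos_iff, hn]
        omega
      obtain ⟨v0⟩ := hV
      set P : ℕ → Prop := fun m => ∃ (a b : V) (q : G.Walk a b), q.IsPath ∧ q.length = m with hP
      have hP0 : P 0 := ⟨v0, v0, Walk.nil, by simp, rfl⟩
      have hPl : P (Nat.findGreatest P n) := Nat.findGreatest_spec (m := 0) (by omega) hP0
      obtain ⟨a, b, p, hp, hplen⟩ := hPl
      have hmax : ∀ (x y : V) (q : G.Walk x y), q.IsPath → q.length ≤ p.length := by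
        intro x y q hq
        rw [hplen]
        apply Nat.le_findGreatest
        · have := hq.length_lt
          omega
        · exact ⟨x, y, q, hq, rfl⟩
      have hlk : p.length < k := by
        by_contra h
        push_neg at h
        obtain ⟨x, y, q, hq, hqlen⟩ := exists_path_len p hp k h
        exact hpath x y q hq hqlen
      have hdegsum : p.length + 1 ≤ G.degree a + G.degree b := by
        have h1 := hmin a
        have h2 := hmin b
        omega
      have hclosed := support_closed p hp hmax hdegsum
      set F : Finset V := p.support.toFinset with hF
      have hFcard : F.card = p.length + 1 := by
        rw [hF, List.toFinset_card_of_nodup hp.support_nodup, Walk.length_support]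
      -- inside: each degree at most k - 1
      have hin : ∀ x ∈ F, G.degree x ≤ k - 1 := by
        intro x hx
        rw [hF, List.mem_toFinset] at hx
        rw [← card_neighborFinset_eq_degree]
        have hsub : G.neighborFinset x ⊆ F.erase x := by
          intro z hz
          rw [mem_neighborFinset] at hz
          rw [Finset.mem_erase, hF, List.mem_toFinset]
          exact ⟨Ne.symm (G.ne_of_adj hz), hclosed x hx z hz⟩
        calc (G.neighborFinset x).card ≤ (F.erase x).card := Finset.card_le_card hsub
          _ = p.length := by
              rw [Finset.card_erase_of_mem (by rw [hF, List.mem_toFinset]; exact hx), hFcard]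
              omega
          _ ≤ k - 1 := by omega
      have hinsum : ∑ x ∈ F, G.degree x ≤ (k - 1) * (p.length + 1) := by
        calc ∑ x ∈ F, G.degree x ≤ F.card • (k - 1) := Finset.sum_le_card_nsmul F _ _ hin
          _ = (k - 1) * (p.length + 1) := by rw [hFcard, smul_eq_mul, mul_comm]
      -- outside : the induced graph on the complement
      set s : Set V := {z : V | z ∉ p.support} with hs
      haveI : DecidablePred (· ∈ s) := Classical.decPred _
      haveI : DecidableRel (G.induce s).Adj := Classical.decRel _
      have hscard : Fintype.card s = n - (p.length + 1) := by
        have h2 : Fintype.card {z : V // z ∈ p.support} = p.length + 1 := by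
          rw [← hFcard]
          have e : {z : V // z ∈ p.support} ≃ {z : V // z ∈ F} :=
            Equiv.subtypeEquivRight (fun z => by rw [hF, List.mem_toFinset])
          rw [Fintype.card_congr e]
          exact Fintype.card_coe F
        have h1 : Fintype.card s = Fintype.card {z : V // ¬ z ∈ p.support} :=
          Fintype.card_congr (Equiv.refl _)
        rw [h1, Fintype.card_subtype_compl, hn, h2]
      have houtdeg : ∀ x : s, (G.induce s).degree x = G.degree (x : V) := by
        intro x
        rw [degree_induce_filter]
        rw [← card_neighborFinset_eq_degree]
        congr 1
        rw [Finset.filter_eq_self]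
        intro z hz
        rw [mem_neighborFinset] at hz
        rw [hs, Set.mem_setOf_eq]
        intro hzs
        exact x.2 (hclosed z hzs (x : V) hz.symm)
      have hIH := ih (n - (p.length + 1)) (by omega) (G.induce s) hscard
        (no_path_induce k s hpath)
      have houtsum : ∑ x ∈ Fᶜ, G.degree x ≤ (k - 1) * (n - (p.length + 1)) := by
        have h1 : ∑ x ∈ Fᶜ, G.degree x = ∑ x : s, (G.induce s).degree x := by
          rw [Finset.sum_subtype (p := fun x => x ∈ s) Fᶜ (fun x => by
            rw [Finset.mem_compl, hF, List.mem_toFinset]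
            exact Iff.rfl) (fun x => G.degree x)]
          exact Finset.sum_congr rfl (fun x _ => (houtdeg x).symm)
        rw [h1]
        exact hIH
      calc ∑ v, G.degree v = ∑ x ∈ F, G.degree x + ∑ x ∈ Fᶜ, G.degree x :=
            (Finset.sum_add_sum_compl F _).symm
        _ ≤ (k - 1) * (p.length + 1) + (k - 1) * (n - (p.length + 1)) :=
            Nat.add_le_add hinsum houtsum
        _ = (k - 1) * ((p.length + 1) + (n - (p.length + 1))) := by ring
        _ ≤ (k - 1) * n := by
            apply Nat.mul_le_mul_left
            omega
    · -- there is a vertex of low degree; delete it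
      push_neg at hmin
      obtain ⟨v, hv⟩ := hmin
      set s : Set V := {z : V | z ≠ v} with hs
      haveI : DecidablePred (· ∈ s) := Classical.decPred _
      haveI : DecidableRel (G.induce s).Adj := Classical.decRel _
      have hscard : Fintype.card s = n - 1 := by
        have h1 : Fintype.card s = Fintype.card {z : V // ¬ z = v} :=
          Fintype.card_congr (Equiv.refl _)
        rw [h1, Fintype.card_subtype_compl, hn, Fintype.card_subtype_eq]
      have hIH := ih (n - 1) (by omega) (G.induce s) hscard (no_path_induce k s hpath)
      have key : ∀ x : s, G.degree (x : V) =
          (G.induce s).degree x + (if G.Adj (x : V) v then 1 else 0) := by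
        intro x
        rw [degree_induce_filter]
        have hfe : ((G.neighborFinset (x : V)).filter (· ∈ s))
            = (G.neighborFinset (x : V)).erase v := by
          rw [← Finset.filter_ne' (G.neighborFinset (x : V)) v]
          apply Finset.filter_congr
          intro z _
          simp [hs]
        rw [hfe, Finset.card_erase_eq_ite]
        by_cases hadj : G.Adj (x : V) v
        · rw [if_pos (by rw [mem_neighborFinset]; exact hadj), if_pos hadj,
            card_neighborFinset_eq_degree]
          have hpos : 0 < G.degree (x : V) := by
            rw [← card_neighborFinset_eq_degree, Finset.card_pos]
            exact ⟨v, by rw [mem_neighborFinset]; exact hadj⟩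
          omega
        · rw [if_neg (by rw [mem_neighborFinset]; exact hadj), if_neg hadj,
            card_neighborFinset_eq_degree]
          omega
      have hsplit : ∑ x, G.degree x = ∑ x ∈ Finset.univ.erase v, G.degree x + G.degree v :=
        (Finset.sum_erase_add _ _ (Finset.mem_univ v)).symm
      have hsum1 : ∑ x ∈ Finset.univ.erase v, G.degree x = ∑ x : s, G.degree (x : V) :=
        Finset.sum_subtype (p := fun x => x ∈ s) (Finset.univ.erase v)
          (fun x => by rw [Finset.mem_erase]; simp; exact Iff.rfl) (fun x => G.degree x)
      have hsum2 : ∑ x : s, G.degree (x : V)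
          = ∑ x : s, (G.induce s).degree x + ∑ x : s, (if G.Adj (x : V) v then 1 else 0) := by
        rw [← Finset.sum_add_distrib]
        exact Finset.sum_congr rfl (fun x _ => key x)
      have hsum3 : ∑ x : s, (if G.Adj (x : V) v then 1 else 0) = G.degree v := by
        have hcard : ∑ x : s, (if G.Adj (x : V) v then 1 else 0)
            = (Finset.univ.filter (fun x : s => G.Adj (x : V) v)).card := by
          simp [Finset.sum_boole]
        rw [hcard, ← card_neighborFinset_eq_degree]
        apply Finset.card_bij (fun (x : s) _ => (x : V))
        · intro x hx
          rw [Finset.mem_filter] at hx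
          rw [mem_neighborFinset]
          exact hx.2.symm
        · intro x _ y _ h
          exact Subtype.ext h
        · intro z hz
          rw [mem_neighborFinset] at hz
          refine ⟨⟨z, ?_⟩, ?_, rfl⟩
          · rw [hs, Set.mem_setOf_eq]
            exact (G.ne_of_adj hz).symm
          · rw [Finset.mem_filter]
            exact ⟨Finset.mem_univ _, hz.symm⟩
      have htot : ∑ x, G.degree x = ∑ x : s, (G.induce s).degree x + 2 * G.degree v := by
        rw [hsplit, hsum1, hsum2, hsum3]
        ring
      have hfin : (k - 1) * (n - 1) + (k - 1) = (k - 1) * n := by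
        have hn1 : n - 1 + 1 = n := by omega
        calc (k - 1) * (n - 1) + (k - 1) = (k - 1) * ((n - 1) + 1) := by ring
          _ = (k - 1) * n := by rw [hn1]
      calc ∑ x, G.degree x ≤ (k - 1) * (n - 1) + (k - 1) := by omega
        _ = (k - 1) * n := hfin

/-- Erdős–Gallai theorem for paths: for `n ≥ k ≥ 1`, an `n`-vertex graph with no
path of length `k` (i.e. with `k` edges) has at most `(k-1)n/2` edges. -/
theorem erdos_gallai_path {V : Type*} [Fintype V] [DecidableEq V]
    (G : SimpleGraph V) [DecidableRel G.Adj] (n k : ℕ)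
    (hn : Fintype.card V = n) (hk : 1 ≤ k) (hkn : k ≤ n)
    (hpath : ∀ (u w : V) (p : G.Walk u w), p.IsPath → p.length ≠ k) :
    2 * G.edgeFinset.card ≤ (k - 1) * n := by
  rw [← SimpleGraph.sum_degrees_eq_twice_card_edges]
  exact EG.aux k hk n G hn hpath
end

section
/- Let H be a connected r-uniform hypergraph with minimum degree at least 2 whose longest Berge-path and longest Berge-cycle both have length ℓ-1, and let C be a Berge-cycle of length ℓ-1 in H with defining vertex set V. Then every hyperedge of H that is not a defining hyperedge of C contains at most one vertex outside V. -/
def IsBergePath {V : Type*} (H : Finset (Finset V)) (t : ℕ)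
    (v : Fin (t+1) → V) (e : Fin t → Finset V) : Prop :=
  Function.Injective v ∧ Function.Injective e ∧ (∀ i, e i ∈ H) ∧
    ∀ i : Fin t, v i.castSucc ∈ e i ∧ v i.succ ∈ e i

def HasBergePath {V : Type*} (H : Finset (Finset V)) (t : ℕ) : Prop :=
  ∃ v e, IsBergePath H t v e

def cnext {t : ℕ} (i : Fin t) : Fin t := ⟨(i.1 + 1) % t, Nat.mod_lt _ i.pos⟩

def cprev {t : ℕ} (i : Fin t) : Fin t := ⟨(i.1 + t - 1) % t, Nat.mod_lt _ i.pos⟩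

def IsBergeCycle {V : Type*} (H : Finset (Finset V)) (t : ℕ)
    (v : Fin t → V) (e : Fin t → Finset V) : Prop :=
  Function.Injective v ∧ Function.Injective e ∧ (∀ i, e i ∈ H) ∧
    ∀ i : Fin t, v i ∈ e i ∧ v (cnext i) ∈ e i

def HasBergeCycle {V : Type*} (H : Finset (Finset V)) (t : ℕ) : Prop :=
  ∃ v e, IsBergeCycle H t v e

def BergeConnected {V : Type*} (H : Finset (Finset V)) : Prop :=
  ∀ x y : V, x ≠ y → ∃ t v e, IsBergePath H t v e ∧ v 0 = x ∧ v (Fin.last t) = y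

lemma mod_add_inj {t b i j : ℕ} (hi : i < t) (hj : j < t)
    (h : (b + i) % t = (b + j) % t) : i = j := by
  have h1 : i % t = j % t := Nat.ModEq.add_left_cancel' b h
  rwa [Nat.mod_eq_of_lt hi, Nat.mod_eq_of_lt hj] at h1

lemma cprev_cnext {t : ℕ} (i : Fin t) : cprev (cnext i) = i := by
  have ht := i.pos
  have hi := i.2
  apply Fin.ext
  show ((i.1 + 1) % t + t - 1) % t = i.1
  rcases Nat.lt_or_ge (i.1 + 1) t with hc | hc
  · rw [Nat.mod_eq_of_lt hc]
    have h2 : i.1 + 1 + t - 1 = i.1 + t := by omega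
    rw [h2, Nat.add_mod_right, Nat.mod_eq_of_lt i.2]
  · have h2 : i.1 + 1 = t := by omega
    rw [h2, Nat.mod_self]
    have h3 : 0 + t - 1 = i.1 := by omega
    rw [h3, Nat.mod_eq_of_lt i.2]

lemma master {V : Type*} {H : Finset (Finset V)} {t : ℕ} {v : Fin t → V} {e : Fin t → Finset V}
    (hC : IsBergeCycle H t v e) (b : Fin t) (m : ℕ)
    (w : ℕ → V) (g : ℕ → Finset V)
    (hw : Set.InjOn w (Set.Iio m))
    (hwv : ∀ i < m, ∀ j, w i ≠ v j)
    (hg : Set.InjOn g (Set.Iio m))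
    (hgH : ∀ i < m, g i ∈ H)
    (hg0 : ∀ j, g 0 = e j → j = cprev b)
    (hgi : ∀ i, 1 ≤ i → i < m → ∀ j, g i ≠ e j)
    (hj1 : v (cprev b) ∈ g 0) (hj2 : w 0 ∈ g 0)
    (hchain : ∀ j, j + 1 < m → w j ∈ g (j + 1) ∧ w (j + 1) ∈ g (j + 1)) :
    HasBergePath H (t - 1 + m) := by
  have ht : 0 < t := b.pos
  obtain ⟨hvinj, heinj, heH, hadj⟩ := hC
  refine ⟨fun i => if h : i.1 < t then v ⟨(b.1 + i.1) % t, Nat.mod_lt _ ht⟩ else w (i.1 - t),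
          fun i => if h : i.1 < t - 1 then e ⟨(b.1 + i.1) % t, Nat.mod_lt _ ht⟩
            else g (i.1 - (t - 1)),
          ?_, ?_, ?_, ?_⟩
  · -- injectivity of vertices
    intro i j hij
    dsimp only at hij
    apply Fin.ext
    have hi := i.2; have hj := j.2
    by_cases h1 : i.1 < t <;> by_cases h2 : j.1 < t
    · rw [dif_pos h1, dif_pos h2] at hij
      exact mod_add_inj h1 h2 (congrArg Fin.val (hvinj hij))
    · rw [dif_pos h1, dif_neg h2] at hij
      exact absurd hij.symm (hwv (j.1 - t) (by omega) _)
    · rw [dif_neg h1, dif_pos h2] at hij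
      exact absurd hij (hwv (i.1 - t) (by omega) _)
    · rw [dif_neg h1, dif_neg h2] at hij
      have := hw (show i.1 - t ∈ Set.Iio m by simp only [Set.mem_Iio]; omega)
        (show j.1 - t ∈ Set.Iio m by simp only [Set.mem_Iio]; omega) hij
      omega
  · -- injectivity of edges
    intro i j hij
    dsimp only at hij
    apply Fin.ext
    have hi := i.2; have hj := j.2
    by_cases h1 : i.1 < t - 1 <;> by_cases h2 : j.1 < t - 1
    · rw [dif_pos h1, dif_pos h2] at hij
      exact mod_add_inj (by omega) (by omega) (congrArg Fin.val (heinj hij))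
    · rw [dif_pos h1, dif_neg h2] at hij
      by_cases h3 : j.1 = t - 1
      · exfalso
        have h4 : j.1 - (t - 1) = 0 := by omega
        rw [h4] at hij
        have h5 := hg0 _ hij.symm
        have h6 : (b.1 + i.1) % t = (b.1 + t - 1) % t := congrArg Fin.val h5
        have h7 : b.1 + t - 1 = b.1 + (t - 1) := by omega
        rw [h7] at h6
        have := mod_add_inj (t := t) (by omega) (by omega) h6
        omega
      · exact absurd hij.symm (hgi (j.1 - (t - 1)) (by omega) (by omega) _)
    · rw [dif_neg h1, dif_pos h2] at hij
      by_cases h3 : i.1 = t - 1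
      · exfalso
        have h4 : i.1 - (t - 1) = 0 := by omega
        rw [h4] at hij
        have h5 := hg0 _ hij
        have h6 : (b.1 + j.1) % t = (b.1 + t - 1) % t := congrArg Fin.val h5
        have h7 : b.1 + t - 1 = b.1 + (t - 1) := by omega
        rw [h7] at h6
        have := mod_add_inj (t := t) (by omega) (by omega) h6
        omega
      · exact absurd hij (hgi (i.1 - (t - 1)) (by omega) (by omega) _)
    · rw [dif_neg h1, dif_neg h2] at hij
      have := hg (show i.1 - (t - 1) ∈ Set.Iio m by simp only [Set.mem_Iio]; omega)
        (show j.1 - (t - 1) ∈ Set.Iio m by simp only [Set.mem_Iio]; omega) hij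
      omega
  · -- membership
    intro i
    dsimp only
    by_cases h1 : i.1 < t - 1
    · rw [dif_pos h1]; exact heH _
    · rw [dif_neg h1]; exact hgH _ (by have := i.2; omega)
  · -- adjacency
    intro i
    have hi := i.2
    dsimp only
    simp only [Fin.coe_castSucc, Fin.val_succ]
    rcases Nat.lt_trichotomy i.1 (t - 1) with h1 | h1 | h1
    · rw [dif_pos (by omega : i.1 < t), dif_pos (by omega : i.1 + 1 < t), dif_pos h1]
      constructor
      · exact (hadj _).1
      · have h2 := (hadj ⟨(b.1 + i.1) % t, Nat.mod_lt _ ht⟩).2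
        have h3 : cnext (⟨(b.1 + i.1) % t, Nat.mod_lt _ ht⟩ : Fin t)
            = ⟨(b.1 + (i.1 + 1)) % t, Nat.mod_lt _ ht⟩ := by
          apply Fin.ext
          show ((b.1 + i.1) % t + 1) % t = (b.1 + (i.1 + 1)) % t
          rw [Nat.mod_add_mod, Nat.add_assoc]
        rwa [h3] at h2
    · rw [dif_pos (by omega : i.1 < t), dif_neg (by omega : ¬ i.1 + 1 < t),
        dif_neg (by omega : ¬ i.1 < t - 1)]
      have h4 : i.1 - (t - 1) = 0 := by omega
      have h5 : i.1 + 1 - t = 0 := by omega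
      rw [h4, h5]
      constructor
      · have h6 : (⟨(b.1 + i.1) % t, Nat.mod_lt _ ht⟩ : Fin t) = cprev b := by
          apply Fin.ext
          show (b.1 + i.1) % t = (b.1 + t - 1) % t
          congr 1
          omega
        rw [h6]
        exact hj1
      · exact hj2
    · rw [dif_neg (by omega : ¬ i.1 < t), dif_neg (by omega : ¬ i.1 + 1 < t),
        dif_neg (by omega : ¬ i.1 < t - 1)]
      have hc := hchain (i.1 - t) (by omega)
      have h4 : i.1 - (t - 1) = (i.1 - t) + 1 := by omega
      have h5 : i.1 + 1 - t = (i.1 - t) + 1 := by omega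
      rw [h4, h5]
      exact ⟨hc.1, hc.2⟩

def NatBP {V : Type*} (H : Finset (Finset V)) (n : ℕ) (u : ℕ → V) (f : ℕ → Finset V) : Prop :=
  Set.InjOn u (Set.Iic n) ∧ Set.InjOn f (Set.Iio n) ∧ (∀ i < n, f i ∈ H) ∧
    ∀ i < n, u i ∈ f i ∧ u (i + 1) ∈ f i

lemma natBP_of_path {V : Type*} {H : Finset (Finset V)} {s : ℕ} {pv : Fin (s+1) → V}
    {pe : Fin s → Finset V} (hp : IsBergePath H s pv pe) :
    NatBP H s (fun i => pv ⟨min i s, by omega⟩)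
      (fun i => if h : i < s then pe ⟨i, h⟩ else ∅) := by
  obtain ⟨h1, h2, h3, h4⟩ := hp
  refine ⟨?_, ?_, ?_, ?_⟩
  · intro i hi j hj hij
    simp only [Set.mem_Iic] at hi hj
    dsimp only at hij
    have := h1 hij
    have := congrArg Fin.val this
    simp only at this
    omega
  · intro i hi j hj hij
    simp only [Set.mem_Iio] at hi hj
    dsimp only at hij
    rw [dif_pos hi, dif_pos hj] at hij
    exact congrArg Fin.val (h2 hij)
  · intro i hi
    dsimp only
    rw [dif_pos hi]
    exact h3 _
  · intro i hi
    dsimp only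
    rw [dif_pos hi]
    have h5 := h4 ⟨i, hi⟩
    have e1 : (⟨min i s, by omega⟩ : Fin (s+1)) = (⟨i, hi⟩ : Fin s).castSucc := by
      apply Fin.ext; simp [Fin.castSucc]; omega
    have e2 : (⟨min (i+1) s, by omega⟩ : Fin (s+1)) = (⟨i, hi⟩ : Fin s).succ := by
      apply Fin.ext; simp [Fin.succ]; omega
    rw [e1, e2]
    exact h5

lemma NatBP.prefix {V : Type*} {H : Finset (Finset V)} {n : ℕ} {u : ℕ → V} {f : ℕ → Finset V}
    (hp : NatBP H n u f) (i : ℕ) (hi : i ≤ n) : NatBP H i u f := by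
  obtain ⟨h1, h2, h3, h4⟩ := hp
  exact ⟨h1.mono (Set.Iic_subset_Iic.mpr hi), h2.mono (Set.Iio_subset_Iio hi),
    fun j hj => h3 j (by omega), fun j hj => h4 j (by omega)⟩

lemma NatBP.suffix {V : Type*} {H : Finset (Finset V)} {n : ℕ} {u : ℕ → V} {f : ℕ → Finset V}
    (hp : NatBP H n u f) (i : ℕ) (hi : i ≤ n) :
    NatBP H (n - i) (fun j => u (i + j)) (fun j => f (i + j)) := by
  obtain ⟨h1, h2, h3, h4⟩ := hp
  refine ⟨?_, ?_, fun j hj => h3 _ (by omega), fun j hj => ?_⟩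
  · intro a ha b hb hab
    simp only [Set.mem_Iic] at ha hb
    dsimp only at hab
    have := h1 (show i + a ∈ Set.Iic n by simp only [Set.mem_Iic]; omega)
      (show i + b ∈ Set.Iic n by simp only [Set.mem_Iic]; omega) hab
    omega
  · intro a ha b hb hab
    simp only [Set.mem_Iio] at ha hb
    dsimp only at hab
    have := h2 (show i + a ∈ Set.Iio n by simp only [Set.mem_Iio]; omega)
      (show i + b ∈ Set.Iio n by simp only [Set.mem_Iio]; omega) hab
    omega
  · dsimp only
    have h5 := h4 (i + j) (by omega)
    refine ⟨h5.1, ?_⟩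
    have : i + (j + 1) = i + j + 1 := by omega
    rw [this]
    exact h5.2

/-- If `H` is a connected `r`-uniform hypergraph with minimum degree at least 2 whose
longest Berge-path and longest Berge-cycle both have length `ℓ-1`, and `C` is a
Berge-cycle of length `ℓ-1` with defining vertex set `V`, then every hyperedge of `H`
that is not a defining hyperedge of `C` contains at most one vertex outside `V`. -/
theorem hyperedge_at_most_one_outside {V : Type*} [Fintype V] [DecidableEq V]
    (H : Finset (Finset V)) (r ℓ : ℕ) (hℓ : 2 ≤ ℓ)
    (hunif : ∀ h ∈ H, h.card = r)
    (hconn : BergeConnected H)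
    (hdeg : ∀ x : V, 2 ≤ (H.filter (fun h => x ∈ h)).card)
    (hpath : HasBergePath H (ℓ - 1)) (hpathmax : ∀ m, HasBergePath H m → m ≤ ℓ - 1)
    (hcycmax : ∀ m, HasBergeCycle H m → m ≤ ℓ - 1)
    (v : Fin (ℓ - 1) → V) (e : Fin (ℓ - 1) → Finset V)
    (hC : IsBergeCycle H (ℓ - 1) v e)
    (h : Finset V) (hh : h ∈ H) (hnd : ∀ i, h ≠ e i) :
    (h.filter (fun x => x ∉ Finset.univ.image v)).card ≤ 1 := by
  classical
  by_contra hcon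
  push_neg at hcon
  rw [Finset.one_lt_card] at hcon
  obtain ⟨x, hx, y, hy, hxy⟩ := hcon
  rw [Finset.mem_filter] at hx hy
  obtain ⟨hxh, hxv⟩ := hx
  obtain ⟨hyh, hyv⟩ := hy
  have hxv' : ∀ i, x ≠ v i := fun i hxi =>
    hxv (Finset.mem_image.mpr ⟨i, Finset.mem_univ i, hxi.symm⟩)
  have hyv' : ∀ i, y ≠ v i := fun i hyi =>
    hyv (Finset.mem_image.mpr ⟨i, Finset.mem_univ i, hyi.symm⟩)
  have ht1 : 1 ≤ ℓ - 1 := by omega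
  -- Case A: x (or y) lies in a cycle edge
  have caseA : ∀ a c : V, a ∈ h → c ∈ h → a ≠ c → (∀ i, a ≠ v i) → (∀ i, c ≠ v i) →
      ∀ i : Fin (ℓ - 1), a ∈ e i → False := by
    intro a c hah hch hac hav hcv i hai
    have hbp := master hC (cnext i) 2
      (fun j => if j = 0 then a else c) (fun j => if j = 0 then e i else h)
      (by
        intro p hp q hq hpq
        simp only [Set.mem_Iio] at hp hq
        dsimp only at hpq
        by_cases p0 : p = 0 <;> by_cases q0 : q = 0
        · omega
        · rw [if_pos p0, if_neg q0] at hpq; exact absurd hpq hac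
        · rw [if_neg p0, if_pos q0] at hpq; exact absurd hpq.symm hac
        · omega)
      (by
        intro p hp j
        by_cases p0 : p = 0
        · rw [if_pos p0]; exact hav j
        · rw [if_neg p0]; exact hcv j)
      (by
        intro p hp q hq hpq
        simp only [Set.mem_Iio] at hp hq
        dsimp only at hpq
        by_cases p0 : p = 0 <;> by_cases q0 : q = 0
        · omega
        · rw [if_pos p0, if_neg q0] at hpq; exact absurd hpq.symm (hnd i)
        · rw [if_neg p0, if_pos q0] at hpq; exact absurd hpq (hnd i)
        · omega)
      (by
        intro p hp
        by_cases p0 : p = 0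
        · rw [if_pos p0]; exact hC.2.2.1 i
        · rw [if_neg p0]; exact hh)
      (by
        intro j hj
        rw [if_pos rfl] at hj
        rw [cprev_cnext]
        exact (hC.2.1 hj).symm
      )
      (by
        intro p hp1 hp2 j
        rw [if_neg (by omega : ¬ p = 0)]
        exact hnd j)
      (by
        rw [if_pos rfl, cprev_cnext]
        exact (hC.2.2.2 i).1)
      (by rw [if_pos rfl, if_pos rfl]; exact hai)
      (by
        intro j hj
        have j0 : j = 0 := by omega
        subst j0
        rw [if_pos rfl, if_neg (by omega : ¬ (0:ℕ) + 1 = 0)]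
        exact ⟨hah, hch⟩)
    have := hpathmax _ hbp
    omega
  by_cases hxe : ∃ i, x ∈ e i
  · obtain ⟨i, hi⟩ := hxe
    exact caseA x y hxh hyh hxy hxv' hyv' i hi
  by_cases hye : ∃ i, y ∈ e i
  · obtain ⟨i, hi⟩ := hye
    exact caseA y x hyh hxh (Ne.symm hxy) hyv' hxv' i hi
  push_neg at hxe hye
  -- Case B: a second edge at x
  have caseB : ∀ (k : Fin (ℓ - 1)) (w1 w2 : V) (f1 f2 : Finset V),
      w1 ≠ w2 → (∀ j, w1 ≠ v j) → (∀ j, w2 ≠ v j) →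
      f1 ∈ H → f2 ∈ H → f1 ≠ f2 → (∀ j, f1 ≠ e j) → (∀ j, f2 ≠ e j) →
      v k ∈ f2 → w2 ∈ f2 → w2 ∈ f1 → w1 ∈ f1 → False := by
    intro k w1 w2 f1 f2 h12 h1v h2v hf1H hf2H hf12 hf1e hf2e hk h2f2 h2f1 h1f1
    have hbp := master hC (cnext k) 2
      (fun j => if j = 0 then w2 else w1) (fun j => if j = 0 then f2 else f1)
      (by
        intro p hp q hq hpq
        simp only [Set.mem_Iio] at hp hq
        dsimp only at hpq
        by_cases p0 : p = 0 <;> by_cases q0 : q = 0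
        · omega
        · rw [if_pos p0, if_neg q0] at hpq; exact absurd hpq.symm h12
        · rw [if_neg p0, if_pos q0] at hpq; exact absurd hpq h12
        · omega)
      (by
        intro p hp j
        by_cases p0 : p = 0
        · rw [if_pos p0]; exact h2v j
        · rw [if_neg p0]; exact h1v j)
      (by
        intro p hp q hq hpq
        simp only [Set.mem_Iio] at hp hq
        dsimp only at hpq
        by_cases p0 : p = 0 <;> by_cases q0 : q = 0
        · omega
        · rw [if_pos p0, if_neg q0] at hpq; exact absurd hpq (Ne.symm hf12)
        · rw [if_neg p0, if_pos q0] at hpq; exact absurd hpq hf12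
        · omega)
      (by
        intro p hp
        by_cases p0 : p = 0
        · rw [if_pos p0]; exact hf2H
        · rw [if_neg p0]; exact hf1H)
      (by
        intro j hj
        rw [if_pos rfl] at hj
        exact absurd hj (hf2e j))
      (by
        intro p hp1 hp2 j
        rw [if_neg (by omega : ¬ p = 0)]
        exact hf1e j)
      (by
        rw [if_pos rfl, cprev_cnext]
        exact hk)
      (by rw [if_pos rfl, if_pos rfl]; exact h2f2)
      (by
        intro j hj
        have j0 : j = 0 := by omega
        subst j0
        rw [if_pos rfl, if_neg (by omega : ¬ (0:ℕ) + 1 = 0)]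
        exact ⟨h2f1, h1f1⟩)
    have := hpathmax _ hbp
    omega
  -- get a second edge g at x
  obtain ⟨g, hgmem, hgh⟩ := Finset.exists_mem_ne
    (s := H.filter (fun h => x ∈ h)) (by have := hdeg x; omega) h
  rw [Finset.mem_filter] at hgmem
  obtain ⟨hgH', hxg⟩ := hgmem
  have hge : ∀ i, g ≠ e i := fun i hgi => hxe i (hgi ▸ hxg)
  by_cases hgv : ∃ k, v k ∈ g
  · obtain ⟨k, hk⟩ := hgv
    exact caseB k y x h g (Ne.symm hxy) hyv' hxv' hh hgH' (Ne.symm hgh) hnd hge hk hxg hxh hyh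
  push_neg at hgv
  by_cases hhv : ∃ j, v j ∈ h
  · obtain ⟨j, hj⟩ := hhv
    have hcard : 1 < g.card := by
      rw [hunif g hgH']
      have h2 : 1 < h.card := Finset.one_lt_card.mpr ⟨x, hxh, y, hyh, hxy⟩
      rw [hunif h hh] at h2
      exact h2
    obtain ⟨z, hzg, hzx⟩ := Finset.exists_mem_ne hcard x
    have hzv : ∀ i, z ≠ v i := fun i hzi => hgv i (hzi ▸ hzg)
    by_cases hzy : z = y
    · subst hzy
      exact caseB j x z g h hxy hxv' hzv hgH' hh hgh hge hnd hj hyh hzg hxg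
    · exact caseB j z x g h (fun hzx2 => hzx hzx2) hzv hxv' hgH' hh hgh hge hnd hj hxh hxg hzg
  push_neg at hhv
  -- Case B3 : h is disjoint from the cycle vertices
  have hPex : ∃ n, ∃ u f, NatBP H n u f ∧ 1 ≤ n ∧ (∃ a, u 0 = v a) ∧ u n ∈ h := by
    obtain ⟨s, pv, pe, hp, h0, hl⟩ := hconn (v ⟨0, ht1⟩) x
      (fun hvx => hxv' ⟨0, ht1⟩ hvx.symm)
    have hs : 1 ≤ s := by
      by_contra hs0
      have hs0' : s = 0 := by omega
      subst hs0'
      apply hxv' ⟨0, ht1⟩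
      rw [← hl]
      show pv (Fin.last 0) = v ⟨0, ht1⟩
      rw [show Fin.last 0 = 0 from rfl, h0]
    refine ⟨s, _, _, natBP_of_path hp, hs, ⟨⟨0, ht1⟩, ?_⟩, ?_⟩
    · show pv ⟨min 0 s, by omega⟩ = v ⟨0, ht1⟩
      have he0 : (⟨min 0 s, by omega⟩ : Fin (s+1)) = 0 := by
        apply Fin.ext; simp
      rw [he0, h0]
    · show pv ⟨min s s, by omega⟩ ∈ h
      have hes : (⟨min s s, by omega⟩ : Fin (s+1)) = Fin.last s := by
        apply Fin.ext; simp [Fin.last]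
      rw [hes, hl]
      exact hxh
  obtain ⟨n, ⟨u, f, hnbp, hn1, ⟨a, hu0⟩, hunh⟩, hmin⟩ :
      ∃ n, (∃ u f, NatBP H n u f ∧ 1 ≤ n ∧ (∃ a, u 0 = v a) ∧ u n ∈ h) ∧
        ∀ k, k < n → ¬ (∃ u f, NatBP H k u f ∧ 1 ≤ k ∧ (∃ a, u 0 = v a) ∧ u k ∈ h) :=
    ⟨Nat.find hPex, Nat.find_spec hPex, fun k hk => Nat.find_min hPex hk⟩
  have ha2 : ∀ i, 1 ≤ i → i ≤ n → ∀ c, u i ≠ v c := by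
    intro i h1 h2 c hic
    rcases eq_or_lt_of_le h2 with heq | hlt
    · subst heq
      exact hhv c (hic ▸ hunh)
    · refine hmin (n - i) (by omega) ⟨_, _, hnbp.suffix i (by omega), by omega, ⟨c, ?_⟩, ?_⟩
      · show u (i + 0) = v c
        rw [Nat.add_zero]; exact hic
      · show u (i + (n - i)) ∈ h
        rw [show i + (n - i) = n by omega]; exact hunh
  have hb2 : ∀ i, i < n → u i ∉ h := by
    intro i hi hih
    rcases Nat.eq_zero_or_pos i with rfl | h1
    · exact hhv a (hu0 ▸ hih)
    · exact hmin i hi ⟨u, f, hnbp.prefix i (by omega), h1, ⟨a, hu0⟩, hih⟩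
  have hc2 : ∀ i, i < n → f i ≠ h := fun i hi hfi => hb2 i hi (hfi ▸ (hnbp.2.2.2 i hi).1)
  have hd2 : ∀ i, 1 ≤ i → i < n → ∀ k, f i ≠ e k := by
    intro i h1 hi k hfi
    refine hmin (n - i) (by omega) ⟨fun j => if j = 0 then v k else u (i + j),
      fun j => f (i + j), ⟨?_, ?_, ?_, ?_⟩, by omega, ⟨k, by simp⟩, ?_⟩
    · intro p hp q hq hpq
      simp only [Set.mem_Iic] at hp hq
      dsimp only at hpq
      by_cases p0 : p = 0 <;> by_cases q0 : q = 0
      · omega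
      · rw [if_pos p0, if_neg q0] at hpq
        exact absurd hpq.symm (ha2 (i + q) (by omega) (by omega) k)
      · rw [if_neg p0, if_pos q0] at hpq
        exact absurd hpq (ha2 (i + p) (by omega) (by omega) k)
      · rw [if_neg p0, if_neg q0] at hpq
        have := hnbp.1 (show i + p ∈ Set.Iic n by simp only [Set.mem_Iic]; omega)
          (show i + q ∈ Set.Iic n by simp only [Set.mem_Iic]; omega) hpq
        omega
    · intro p hp q hq hpq
      simp only [Set.mem_Iio] at hp hq
      dsimp only at hpq
      have := hnbp.2.1 (show i + p ∈ Set.Iio n by simp only [Set.mem_Iio]; omega)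
        (show i + q ∈ Set.Iio n by simp only [Set.mem_Iio]; omega) hpq
      omega
    · intro j hj
      exact hnbp.2.2.1 _ (by omega)
    · intro j hj
      dsimp only
      constructor
      · by_cases j0 : j = 0
        · subst j0
          rw [if_pos rfl, Nat.add_zero, hfi]
          exact (hC.2.2.2 k).1
        · rw [if_neg j0]
          exact (hnbp.2.2.2 (i + j) (by omega)).1
      · rw [if_neg (by omega : ¬ j + 1 = 0)]
        have h5 := (hnbp.2.2.2 (i + j) (by omega)).2
        rw [show i + (j + 1) = i + j + 1 by omega]
        exact h5
    · dsimp only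
      rw [if_neg (by omega : ¬ (n - i) = 0), show i + (n - i) = n by omega]
      exact hunh
  -- the vertex of h to append at the very end
  obtain ⟨z, hzh, hzv2, hzun⟩ : ∃ z, z ∈ h ∧ (∀ j, z ≠ v j) ∧ z ≠ u n := by
    by_cases hux : u n = x
    · exact ⟨y, hyh, hyv', fun hyn => hxy (hyn.trans hux).symm⟩
    · exact ⟨x, hxh, hxv', fun hxn => hux hxn.symm⟩
  -- the data for the master lemma
  have hwInj : Set.InjOn (fun j => if j < n then u (j+1) else z) (Set.Iio (n+1)) := by
    intro p hp q hq hpq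
    simp only [Set.mem_Iio] at hp hq
    dsimp only at hpq
    by_cases p0 : p < n <;> by_cases q0 : q < n
    · rw [if_pos p0, if_pos q0] at hpq
      have := hnbp.1 (show p + 1 ∈ Set.Iic n by simp only [Set.mem_Iic]; omega)
        (show q + 1 ∈ Set.Iic n by simp only [Set.mem_Iic]; omega) hpq
      omega
    · rw [if_pos p0, if_neg q0] at hpq
      exfalso
      by_cases hp1 : p + 1 = n
      · exact hzun (hpq.symm.trans (by rw [hp1]))
      · exact hb2 (p + 1) (by omega) (hpq ▸ hzh)
    · rw [if_neg p0, if_pos q0] at hpq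
      exfalso
      by_cases hq1 : q + 1 = n
      · exact hzun (hpq.trans (by rw [hq1]))
      · exact hb2 (q + 1) (by omega) (hpq.symm ▸ hzh)
    · omega
  have hwv2 : ∀ p, p < n + 1 → ∀ j, (fun j => if j < n then u (j+1) else z) p ≠ v j := by
    intro p hp j
    dsimp only
    by_cases p0 : p < n
    · rw [if_pos p0]; exact ha2 (p + 1) (by omega) (by omega) j
    · rw [if_neg p0]; exact hzv2 j
  have hgInj : Set.InjOn (fun j => if j < n then f j else h) (Set.Iio (n+1)) := by
    intro p hp q hq hpq
    simp only [Set.mem_Iio] at hp hq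
    dsimp only at hpq
    by_cases p0 : p < n <;> by_cases q0 : q < n
    · rw [if_pos p0, if_pos q0] at hpq
      have := hnbp.2.1 (show p ∈ Set.Iio n by simp only [Set.mem_Iio]; omega)
        (show q ∈ Set.Iio n by simp only [Set.mem_Iio]; omega) hpq
      omega
    · rw [if_pos p0, if_neg q0] at hpq
      exact absurd hpq (hc2 p p0)
    · rw [if_neg p0, if_pos q0] at hpq
      exact absurd hpq.symm (hc2 q q0)
    · omega
  have hgH2 : ∀ p, p < n + 1 → (fun j => if j < n then f j else h) p ∈ H := by
    intro p hp
    dsimp only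
    by_cases p0 : p < n
    · rw [if_pos p0]; exact hnbp.2.2.1 p p0
    · rw [if_neg p0]; exact hh
  have hgi2 : ∀ p, 1 ≤ p → p < n + 1 → ∀ j, (fun j => if j < n then f j else h) p ≠ e j := by
    intro p hp1 hp2 j
    dsimp only
    by_cases p0 : p < n
    · rw [if_pos p0]; exact hd2 p hp1 p0 j
    · rw [if_neg p0]; exact hnd j
  have hj2' : (fun j => if j < n then u (j+1) else z) 0 ∈
      (fun j => if j < n then f j else h) 0 := by
    dsimp only
    rw [if_pos (by omega : (0:ℕ) < n), if_pos (by omega : (0:ℕ) < n)]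
    exact (hnbp.2.2.2 0 (by omega)).2
  have hch : ∀ j, j + 1 < n + 1 →
      (fun j => if j < n then u (j+1) else z) j ∈ (fun j => if j < n then f j else h) (j+1) ∧
      (fun j => if j < n then u (j+1) else z) (j+1) ∈
        (fun j => if j < n then f j else h) (j+1) := by
    intro j hj
    dsimp only
    by_cases hj1 : j + 1 < n
    · rw [if_pos hj1, if_pos (by omega : j < n), if_pos hj1]
      exact ⟨(hnbp.2.2.2 (j+1) (by omega)).1, (hnbp.2.2.2 (j+1) (by omega)).2⟩
    · have hjn : j + 1 = n := by omega
      rw [if_neg hj1, if_pos (by omega : j < n), if_neg hj1]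
      constructor
      · rw [hjn]; exact hunh
      · exact hzh
  by_cases hf0 : ∃ k, f 0 = e k
  · obtain ⟨k, hk⟩ := hf0
    have hbp := master hC (cnext k) (n+1) _ _ hwInj hwv2 hgInj hgH2
      (by
        intro j hj
        rw [if_pos (by omega : (0:ℕ) < n), hk] at hj
        rw [cprev_cnext]
        exact (hC.2.1 hj.symm)
      ) hgi2
      (by
        rw [cprev_cnext, if_pos (by omega : (0:ℕ) < n), hk]
        exact (hC.2.2.2 k).1) hj2' hch
    have := hpathmax _ hbp
    omega
  · push_neg at hf0
    have hbp := master hC (cnext a) (n+1) _ _ hwInj hwv2 hgInj hgH2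
      (by
        intro j hj
        rw [if_pos (by omega : (0:ℕ) < n)] at hj
        exact absurd hj (hf0 j))
      hgi2
      (by
        rw [cprev_cnext, if_pos (by omega : (0:ℕ) < n), ← hu0]
        exact (hnbp.2.2.2 0 (by omega)).1) hj2' hch
    have := hpathmax _ hbp
    omega
end

section
/- Let H be a connected r-uniform hypergraph whose longest Berge-path and longest Berge-cycle both have length ℓ-1, and let C be a Berge-cycle of length ℓ-1 with defining vertices v_1,...,v_{ℓ-1} and defining hyperedges e_1,...,e_{ℓ-1} where v_i, v_{i+1} ∈ e_i (mod ℓ-1). If u, v are (not necessarily distinct) vertices outside the defining vertex set of C, then there cannot exist distinct hyperedges h_1, h_2 of H not among the defining hyperedges of C and an index i with v, v_i ∈ h_1 and u, v_{i+1} ∈ h_2. -/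
/-- Lemma 8 (ii): if `u, v` are (not necessarily distinct) vertices outside the
defining vertex set of a longest Berge-cycle `C`, then there cannot exist distinct
non-defining hyperedges `h₁, h₂` and an index `i` with `v, vᵢ ∈ h₁` and
`u, v_{i+1} ∈ h₂`. -/
theorem no_consecutive_outside_edges {V : Type*} [Fintype V] [DecidableEq V]
    (H : Finset (Finset V)) (r ℓ : ℕ) (hℓ : 2 ≤ ℓ)
    (hunif : ∀ h ∈ H, h.card = r)
    (hconn : BergeConnected H)
    (hpath : HasBergePath H (ℓ - 1)) (hpathmax : ∀ m, HasBergePath H m → m ≤ ℓ - 1)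
    (hcycmax : ∀ m, HasBergeCycle H m → m ≤ ℓ - 1)
    (v : Fin (ℓ - 1) → V) (e : Fin (ℓ - 1) → Finset V)
    (hC : IsBergeCycle H (ℓ - 1) v e)
    (u w : V) (hu : u ∉ Set.range v) (hw : w ∉ Set.range v) :
    ¬ ∃ (h₁ h₂ : Finset V) (i : Fin (ℓ - 1)),
        h₁ ∈ H ∧ h₂ ∈ H ∧ h₁ ≠ h₂ ∧ (∀ j, h₁ ≠ e j) ∧ (∀ j, h₂ ≠ e j) ∧
        w ∈ h₁ ∧ v i ∈ h₁ ∧ u ∈ h₂ ∧ v (cnext i) ∈ h₂ := by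
  rintro ⟨h₁, h₂, i, hh₁, hh₂, hne, hne₁, hne₂, hw₁, hvi₁, hu₂, hvi₂⟩
  obtain ⟨hvinj, heinj, heH, hmem⟩ := hC
  have ht : 1 ≤ ℓ - 1 := by omega
  set idx : ℕ → Fin (ℓ - 1) := fun n => ⟨(i.1 + 1 + n) % (ℓ - 1), Nat.mod_lt _ (by omega)⟩ with hidx
  have idx_inj : ∀ a b : ℕ, a < (ℓ - 1) → b < (ℓ - 1) → idx a = idx b → a = b := by
    intro a b ha hb hab
    have h1 : (i.1 + 1 + a) % (ℓ - 1) = (i.1 + 1 + b) % (ℓ - 1) := congrArg Fin.val hab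
    have h2 : a % (ℓ - 1) = b % (ℓ - 1) := Nat.ModEq.add_left_cancel' (i.1 + 1) h1
    rwa [Nat.mod_eq_of_lt ha, Nat.mod_eq_of_lt hb] at h2
  have cnext_idx : ∀ n : ℕ, cnext (idx n) = idx (n + 1) := by
    intro n
    apply Fin.ext
    show ((i.1 + 1 + n) % (ℓ - 1) + 1) % (ℓ - 1) = (i.1 + 1 + (n + 1)) % (ℓ - 1)
    rw [Nat.mod_add_mod]
    congr 1
  have idx_last : idx ((ℓ - 1) - 1) = i := by
    apply Fin.ext
    show (i.1 + 1 + ((ℓ - 1) - 1)) % (ℓ - 1) = i.1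
    have h1 : i.1 + 1 + ((ℓ - 1) - 1) = i.1 + (ℓ - 1) := by omega
    rw [h1, Nat.add_mod_right, Nat.mod_eq_of_lt i.isLt]
  have idx_zero : idx 0 = cnext i := rfl
  by_cases huw : u = w
  · -- build a Berge cycle of length (ℓ - 1)+1
    subst huw
    have hcyc : HasBergeCycle H ((ℓ - 1) + 1) := by
      refine ⟨fun j => if j.1 < (ℓ - 1) then v (idx j.1) else u,
        fun j => if j.1 + 1 < (ℓ - 1) then e (idx j.1) else if j.1 = (ℓ - 1) - 1 then h₁ else h₂,
        ?_, ?_, ?_, ?_⟩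
      · intro a b hab
        simp only at hab
        rcases lt_or_ge a.1 (ℓ - 1) with ha | ha <;> rcases lt_or_ge b.1 (ℓ - 1) with hb | hb
        · rw [if_pos ha, if_pos hb] at hab
          exact Fin.ext (idx_inj _ _ ha hb (hvinj hab))
        · rw [if_pos ha, if_neg (by omega)] at hab
          exact absurd ⟨_, hab⟩ hu
        · rw [if_neg (by omega), if_pos hb] at hab
          exact absurd ⟨_, hab.symm⟩ hu
        · have := a.isLt; have := b.isLt; exact Fin.ext (by omega)
      · intro a b hab
        simp only at hab
        by_cases ha : a.1 + 1 < (ℓ - 1) <;> by_cases hb : b.1 + 1 < (ℓ - 1)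
        · rw [if_pos ha, if_pos hb] at hab
          have := idx_inj _ _ (by omega) (by omega) (heinj hab)
          exact Fin.ext this
        · rw [if_pos ha, if_neg hb] at hab
          split_ifs at hab
          · exact absurd hab.symm (hne₁ _)
          · exact absurd hab.symm (hne₂ _)
        · rw [if_neg ha, if_pos hb] at hab
          split_ifs at hab
          · exact absurd hab (hne₁ _)
          · exact absurd hab (hne₂ _)
        · rw [if_neg ha, if_neg hb] at hab
          by_cases ha' : a.1 = (ℓ - 1) - 1 <;> by_cases hb' : b.1 = (ℓ - 1) - 1
          · exact Fin.ext (by omega)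
          · rw [if_pos ha', if_neg hb'] at hab; exact absurd hab hne
          · rw [if_neg ha', if_pos hb'] at hab; exact absurd hab.symm hne
          · have := a.isLt; have := b.isLt; exact Fin.ext (by omega)
      · intro j
        simp only
        split_ifs
        · exact heH _
        · exact hh₁
        · exact hh₂
      · intro j
        simp only
        have hcj : (cnext j).1 = (j.1 + 1) % ((ℓ - 1) + 1) := rfl
        by_cases hj : j.1 + 1 < (ℓ - 1)
        · have hc : (cnext j).1 = j.1 + 1 := by rw [hcj, Nat.mod_eq_of_lt (by omega)]
          rw [if_pos hj, if_pos (by omega : j.1 < (ℓ - 1)), hc, if_pos hj]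
          refine ⟨(hmem (idx j.1)).1, ?_⟩
          have := (hmem (idx j.1)).2
          rwa [cnext_idx] at this
        · by_cases hj' : j.1 = (ℓ - 1) - 1
          · have hc : (cnext j).1 = (ℓ - 1) := by
              rw [hcj, hj']
              have h1 : (ℓ - 1) - 1 + 1 = (ℓ - 1) := by omega
              rw [h1, Nat.mod_eq_of_lt (by omega)]
            rw [if_neg hj, if_pos hj', if_pos (by omega : j.1 < (ℓ - 1)), hc,
              if_neg (by omega)]
            refine ⟨?_, hw₁⟩
            rw [hj', idx_last]; exact hvi₁
          · have hjt : j.1 = (ℓ - 1) := by have := j.isLt; omega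
            have hc : (cnext j).1 = 0 := by
              rw [hcj, hjt, Nat.mod_self]
            rw [if_neg hj, if_neg hj', if_neg (by omega), hc,
              if_pos (by omega : 0 < (ℓ - 1)), idx_zero]
            exact ⟨hu₂, hvi₂⟩
    have := hcycmax ((ℓ - 1) + 1) hcyc
    omega
  · -- build a Berge path of length (ℓ - 1)+1
    have hp : HasBergePath H ((ℓ - 1) + 1) := by
      refine ⟨fun j => if j.1 = 0 then u else if j.1 ≤ (ℓ - 1) then v (idx (j.1 - 1)) else w,
        fun j => if j.1 = 0 then h₂ else if j.1 < (ℓ - 1) then e (idx (j.1 - 1)) else h₁,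
        ?_, ?_, ?_, ?_⟩
      · intro a b hab
        simp only at hab
        by_cases ha : a.1 = 0 <;> by_cases hb : b.1 = 0
        · exact Fin.ext (by omega)
        · rw [if_pos ha, if_neg hb] at hab
          split_ifs at hab
          · exact absurd ⟨_, hab.symm⟩ hu
          · exact absurd hab huw
        · rw [if_neg ha, if_pos hb] at hab
          split_ifs at hab
          · exact absurd ⟨_, hab⟩ hu
          · exact absurd hab.symm huw
        · rw [if_neg ha, if_neg hb] at hab
          by_cases ha' : a.1 ≤ (ℓ - 1) <;> by_cases hb' : b.1 ≤ (ℓ - 1)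
          · rw [if_pos ha', if_pos hb'] at hab
            have := idx_inj _ _ (by omega) (by omega) (hvinj hab)
            exact Fin.ext (by omega)
          · rw [if_pos ha', if_neg hb'] at hab
            exact absurd ⟨_, hab⟩ hw
          · rw [if_neg ha', if_pos hb'] at hab
            exact absurd ⟨_, hab.symm⟩ hw
          · have := a.isLt; have := b.isLt; exact Fin.ext (by omega)
      · intro a b hab
        simp only at hab
        by_cases ha : a.1 = 0 <;> by_cases hb : b.1 = 0
        · exact Fin.ext (by omega)
        · rw [if_pos ha, if_neg hb] at hab
          split_ifs at hab
          · exact absurd hab (hne₂ _)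
          · exact absurd hab.symm hne
        · rw [if_neg ha, if_pos hb] at hab
          split_ifs at hab
          · exact absurd hab.symm (hne₂ _)
          · exact absurd hab hne
        · rw [if_neg ha, if_neg hb] at hab
          by_cases ha' : a.1 < (ℓ - 1) <;> by_cases hb' : b.1 < (ℓ - 1)
          · rw [if_pos ha', if_pos hb'] at hab
            have := idx_inj _ _ (by omega) (by omega) (heinj hab)
            exact Fin.ext (by omega)
          · rw [if_pos ha', if_neg hb'] at hab
            exact absurd hab.symm (hne₁ _)
          · rw [if_neg ha', if_pos hb'] at hab
            exact absurd hab (hne₁ _)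
          · have := a.isLt; have := b.isLt; exact Fin.ext (by omega)
      · intro j
        simp only
        split_ifs
        · exact hh₂
        · exact heH _
        · exact hh₁
      · intro j
        simp only
        have hcs : (j.castSucc : Fin ((ℓ - 1) + 2)).1 = j.1 := rfl
        have hsc : (j.succ : Fin ((ℓ - 1) + 2)).1 = j.1 + 1 := rfl
        by_cases hj : j.1 = 0
        · rw [if_pos hj, hcs, hsc, if_pos hj, if_neg (by omega),
            if_pos (by omega : j.1 + 1 ≤ (ℓ - 1)), hj]
          exact ⟨hu₂, by simpa [idx_zero] using hvi₂⟩
        · by_cases hj' : j.1 < (ℓ - 1)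
          · rw [if_neg hj, if_pos hj', hcs, hsc, if_neg hj, if_pos (by omega : j.1 ≤ (ℓ - 1)),
              if_neg (by omega), if_pos (by omega : j.1 + 1 ≤ (ℓ - 1))]
            have h1 : j.1 + 1 - 1 = j.1 - 1 + 1 := by omega
            constructor
            · exact (hmem (idx (j.1 - 1))).1
            · have := (hmem (idx (j.1 - 1))).2
              rw [cnext_idx] at this
              rwa [h1]
          · have hjt : j.1 = (ℓ - 1) := by have := j.isLt; omega
            rw [if_neg hj, if_neg hj', hcs, hsc, if_neg hj, if_pos (by omega : j.1 ≤ (ℓ - 1)),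
              if_neg (by omega), if_neg (by omega : ¬ j.1 + 1 ≤ (ℓ - 1)), hjt]
            exact ⟨by rw [idx_last]; exact hvi₁, hw₁⟩
    have := hpathmax ((ℓ - 1) + 1) hp
    omega
end

section
/- Let H be a connected hypergraph and C a Berge-cycle in H whose defining hyperedges together cover strictly fewer vertices than |V(H)|. Then H contains a Berge-path of length at least the length of C. -/
lemma mod_add_inj_s7 (n k a b : ℕ) (ha : a < n) (hb : b < n)
    (h : (k + a) % n = (k + b) % n) : a = b := by
  have h1 : a ≡ b [MOD n] := Nat.ModEq.add_left_cancel' k h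
  exact h1.eq_of_lt_of_lt ha hb

lemma concat_path {V : Type*} (H : Finset (Finset V)) (S : Finset V)
    (j s : ℕ) (hj : 0 < j)
    (p : Fin j → V) (f : Fin j → Finset V)
    (c : Fin (s+1) → V) (d : Fin s → Finset V)
    (hpinj : Function.Injective p) (hfinj : Function.Injective f)
    (hcinj : Function.Injective c) (hdinj : Function.Injective d)
    (hpS : ∀ n, p n ∉ S) (hcS : ∀ l, c l ∈ S) (hdS : ∀ l, d l ⊆ S)
    (hfH : ∀ n, f n ∈ H) (hdH : ∀ l, d l ∈ H)
    (hpf : ∀ n, p n ∈ f n)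
    (hpf2 : ∀ n : Fin j, ∀ h : n.1 + 1 < j, p ⟨n.1+1, h⟩ ∈ f n)
    (hc0 : c 0 ∈ f ⟨j-1, by omega⟩)
    (hcd : ∀ l : Fin s, c l.castSucc ∈ d l ∧ c l.succ ∈ d l) :
    HasBergePath H (j + s) := by
  refine ⟨fun n => if h : n.1 < j then p ⟨n.1, h⟩ else c ⟨n.1 - j, by omega⟩,
          fun n => if h : n.1 < j then f ⟨n.1, h⟩ else d ⟨n.1 - j, by omega⟩,
          ?_, ?_, ?_, ?_⟩
  · intro a b hab
    dsimp only at hab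
    split_ifs at hab with h1 h2 h2
    · have h3 := congrArg Fin.val (hpinj hab)
      exact Fin.ext h3
    · exact absurd (hab ▸ hcS _) (hpS _)
    · exact absurd (hab.symm ▸ hcS _) (hpS _)
    · have h3 := congrArg Fin.val (hcinj hab)
      simp only at h3
      apply Fin.ext
      omega
  · intro a b hab
    dsimp only at hab
    split_ifs at hab with h1 h2 h2
    · have h3 := congrArg Fin.val (hfinj hab)
      exact Fin.ext h3
    · exact absurd (hdS _ (hab ▸ hpf _)) (hpS _)
    · exact absurd (hdS _ (hab.symm ▸ hpf _)) (hpS _)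
    · have h3 := congrArg Fin.val (hdinj hab)
      simp only at h3
      apply Fin.ext
      omega
  · intro i
    dsimp only
    split_ifs with h
    · exact hfH _
    · exact hdH _
  · intro i
    have hcs : (i.castSucc).1 = i.1 := rfl
    have hss : (i.succ).1 = i.1 + 1 := rfl
    by_cases h : i.1 < j
    · constructor
      · dsimp only
        rw [dif_pos (show i.castSucc.1 < j from h), dif_pos h]
        exact hpf _
      · dsimp only
        rw [dif_pos h]
        by_cases h2 : i.1 + 1 < j
        · rw [dif_pos (show i.succ.1 < j from h2)]
          exact hpf2 ⟨i.1, h⟩ h2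
        · rw [dif_neg (show ¬ i.succ.1 < j from h2)]
          have he1 : (⟨i.succ.1 - j, by omega⟩ : Fin (s+1)) = 0 := by
            apply Fin.ext; simp [hss]; omega
          have he2 : (⟨i.1, h⟩ : Fin j) = ⟨j-1, by omega⟩ := by
            apply Fin.ext; simp; omega
          rw [he1, he2]
          exact hc0
    · constructor
      · dsimp only
        rw [dif_neg (show ¬ i.castSucc.1 < j from h), dif_neg h]
        have he : (⟨i.castSucc.1 - j, by omega⟩ : Fin (s+1))
            = (⟨i.1 - j, by omega⟩ : Fin s).castSucc := by
          apply Fin.ext; simp [hcs]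
        rw [he]
        exact (hcd _).1
      · dsimp only
        rw [dif_neg (show ¬ i.succ.1 < j by omega), dif_neg h]
        have he : (⟨i.succ.1 - j, by omega⟩ : Fin (s+1))
            = (⟨i.1 - j, by omega⟩ : Fin s).succ := by
          apply Fin.ext; simp [hss]; omega
        rw [he]
        exact (hcd _).2

/-- If `H` is a connected hypergraph and `C` a Berge-cycle whose defining hyperedges
together cover strictly fewer vertices than `|V(H)|`, then `H` contains a Berge-path
of length at least the length of `C`. -/
theorem bergePath_of_uncovered_vertex {V : Type*} [Fintype V] [DecidableEq V]
    (H : Finset (Finset V)) (t : ℕ)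
    (hconn : BergeConnected H)
    (v : Fin t → V) (e : Fin t → Finset V) (hC : IsBergeCycle H t v e)
    (hcov : (Finset.univ.biUnion (fun i => e i)).card < Fintype.card V) :
    ∃ m, t ≤ m ∧ HasBergePath H m := by
  classical
  rcases Nat.eq_zero_or_pos t with ht | ht
  · subst ht
    have hpos : 0 < Fintype.card V := by omega
    obtain ⟨x⟩ := Fintype.card_pos_iff.mp hpos
    refine ⟨0, le_refl _, fun _ => x, Fin.elim0, ?_, ?_, ?_, ?_⟩
    · intro a b _; apply Fin.ext; omega
    · intro a; exact a.elim0
    · intro a; exact a.elim0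
    · intro a; exact a.elim0
  obtain ⟨s, rfl⟩ : ∃ s, t = s + 1 := ⟨t - 1, by omega⟩
  set S : Finset V := Finset.univ.biUnion (fun i => e i) with hSdef
  have heS : ∀ i, e i ⊆ S := fun i => Finset.subset_biUnion_of_mem _ (Finset.mem_univ i)
  obtain ⟨hvinj, heinj, heH, hve⟩ := hC
  obtain ⟨x, hx⟩ : ∃ x, x ∉ S := by
    by_contra hcon
    push_neg at hcon
    have : S = Finset.univ := Finset.eq_univ_iff_forall.mpr hcon
    rw [this, Finset.card_univ] at hcov
    omega
  have hy : v 0 ∈ S := heS 0 (hve 0).1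
  obtain ⟨r, q, f, ⟨hqinj, hfinj, hfH, hqf⟩, hq0, hqlast⟩ :=
    hconn x (v 0) (by rintro rfl; exact hx hy)
  -- find the first index on the path lying in S
  have hPex : ∃ n, ∃ h : n < r + 1, q ⟨n, h⟩ ∈ S := by
    refine ⟨r, Nat.lt_succ_self r, ?_⟩
    have : (⟨r, Nat.lt_succ_self r⟩ : Fin (r+1)) = Fin.last r := rfl
    rw [this, hqlast]; exact hy
  have hPspec := Nat.find_spec hPex
  set j := Nat.find hPex with hjdef
  obtain ⟨hjr, hjS⟩ := hPspec
  have hjle : j ≤ r := by omega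
  have hmin : ∀ n, n < j → ∀ h : n < r + 1, q ⟨n, h⟩ ∉ S := by
    intro n hn h hmem
    exact Nat.find_min hPex (hjdef ▸ hn) ⟨h, hmem⟩
  have hj1 : 0 < j := by
    by_contra h0
    push_neg at h0
    have hz : (⟨j, hjr⟩ : Fin (r+1)) = 0 := by
      apply Fin.ext; simp; omega
    rw [hz, hq0] at hjS
    exact hx hjS
  -- choose the anchor edge index k
  obtain ⟨k, hk1, hk2⟩ : ∃ k : Fin (s+1), q ⟨j, hjr⟩ ∈ e k ∧
      ∀ i', q ⟨j, hjr⟩ = v i' → i' = k := by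
    by_cases hA : ∃ i, q ⟨j, hjr⟩ = v i
    · obtain ⟨i, hi⟩ := hA
      exact ⟨i, by rw [hi]; exact (hve i).1, fun i' hi' => hvinj (hi'.symm.trans hi)⟩
    · obtain ⟨k, _, hk⟩ := Finset.mem_biUnion.mp hjS
      exact ⟨k, hk, fun i' hi' => absurd ⟨i', hi'⟩ hA⟩
  have hmodlt : ∀ a : ℕ, a % (s+1) < s + 1 := fun a => Nat.mod_lt _ (Nat.succ_pos s)
  have key : ∀ m : Fin (s+1), ¬ m.1 = 0 →
      q ⟨j, hjr⟩ ≠ v ⟨(k.1 + m.1) % (s+1), hmodlt _⟩ := by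
    intro m hm hcontra
    have hc := hk2 _ hcontra
    have hval := congrArg Fin.val hc
    simp only at hval
    have := mod_add_inj_s7 (s+1) k.1 m.1 0 m.isLt (by omega)
      (by simpa [Nat.mod_eq_of_lt k.isLt] using hval)
    omega
  refine ⟨j + s, by omega, ?_⟩
  refine concat_path H S j s hj1
    (fun n => q ⟨n.1, by omega⟩) (fun n => f ⟨n.1, by omega⟩)
    (fun l => if l.1 = 0 then q ⟨j, hjr⟩ else v ⟨(k.1 + l.1) % (s+1), hmodlt _⟩)
    (fun l => e ⟨(k.1 + l.1) % (s+1), hmodlt _⟩)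
    ?_ ?_ ?_ ?_ ?_ ?_ ?_ ?_ ?_ ?_ ?_ ?_ ?_
  · intro a b hab
    have h3 := congrArg Fin.val (hqinj hab)
    exact Fin.ext h3
  · intro a b hab
    have h3 := congrArg Fin.val (hfinj hab)
    exact Fin.ext h3
  · intro a b hab
    dsimp only at hab
    by_cases ha : a.1 = 0 <;> by_cases hb : b.1 = 0
    · apply Fin.ext; omega
    · rw [if_pos ha, if_neg hb] at hab
      exact absurd hab (key b hb)
    · rw [if_neg ha, if_pos hb] at hab
      exact absurd hab.symm (key a ha)
    · rw [if_neg ha, if_neg hb] at hab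
      have h3 := congrArg Fin.val (hvinj hab)
      simp only at h3
      exact Fin.ext (mod_add_inj_s7 (s+1) k.1 a.1 b.1 a.isLt b.isLt h3)
  · intro a b hab
    have h3 := congrArg Fin.val (heinj hab)
    simp only at h3
    exact Fin.ext (mod_add_inj_s7 (s+1) k.1 a.1 b.1 (by omega) (by omega) h3)
  · intro n
    exact hmin n.1 n.isLt _
  · intro l
    split_ifs with h
    · exact hjS
    · exact heS _ (hve _).1
  · intro l
    exact heS _
  · intro n
    exact hfH _
  · intro l
    exact heH _
  · intro n
    exact (hqf ⟨n.1, by omega⟩).1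
  · intro n h
    exact (hqf ⟨n.1, by omega⟩).2
  · dsimp only
    have h0 : ((0 : Fin (s+1)).1 = 0) := Fin.val_zero _
    rw [if_pos h0]
    have he : (⟨j - 1, by omega⟩ : Fin r).succ = ⟨j, hjr⟩ := by
      apply Fin.ext; simp; omega
    have := (hqf ⟨j - 1, by omega⟩).2
    rwa [he] at this
  · intro l
    constructor
    · by_cases h : l.1 = 0
      · rw [if_pos (show l.castSucc.1 = 0 from h)]
        have he : (⟨(k.1 + l.1) % (s+1), hmodlt _⟩ : Fin (s+1)) = k := by
          apply Fin.ext; simp [h, Nat.mod_eq_of_lt k.isLt]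
        rw [he]
        exact hk1
      · rw [if_neg (show ¬ l.castSucc.1 = 0 from h)]
        exact (hve _).1
    · rw [if_neg (show ¬ l.succ.1 = 0 by simp)]
      have he : (⟨(k.1 + l.succ.1) % (s+1), hmodlt _⟩ : Fin (s+1))
          = cnext ⟨(k.1 + l.1) % (s+1), hmodlt _⟩ := by
        apply Fin.ext
        show (k.1 + (l.1 + 1)) % (s+1) = ((k.1 + l.1) % (s+1) + 1) % (s+1)
        rw [Nat.mod_add_mod, Nat.add_assoc]
      rw [he]
      exact (hve _).2
end

section
/- Let P be a Berge-path of length ℓ-1 in a 3-uniform hypergraph H that is a longest Berge-path and, among all longest Berge-paths, minimizes x_1 + x_ℓ, where x_j denotes the number of defining hyperedges of P incident to the j-th defining vertex u_j. Then x_1 ≤ √(3(ℓ-1)) and x_ℓ ≤ √(3(ℓ-1)). -/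
lemma card_filter_involutive {n : ℕ} {τ : Fin n → Fin n} (hτ : Function.Involutive τ)
    (p : Fin n → Prop) [DecidablePred p] :
    (Finset.univ.filter fun j => p (τ j)).card = (Finset.univ.filter p).card := by
  have himg : (Finset.univ.filter fun j => p (τ j)) = (Finset.univ.filter p).image τ := by
    ext x
    simp only [Finset.mem_filter, Finset.mem_image, Finset.mem_univ, true_and]
    constructor
    · intro hx; exact ⟨τ x, hx, hτ x⟩
    · rintro ⟨a, ha, rfl⟩; rwa [hτ a]
  rw [himg, Finset.card_image_of_injective _ hτ.injective]

lemma aux_bound {V : Type*} [DecidableEq V]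
    (H : Finset (Finset V)) (t : ℕ)
    (hunif : ∀ h ∈ H, h.card = 3)
    (v : Fin (t+1) → V) (e : Fin t → Finset V)
    (hP : IsBergePath H t v e)
    (hmin : ∀ (v' : Fin (t+1) → V) (e' : Fin t → Finset V), IsBergePath H t v' e' →
      (Finset.univ.filter fun i => v 0 ∈ e i).card +
        (Finset.univ.filter fun i => v (Fin.last t) ∈ e i).card ≤
      (Finset.univ.filter fun i => v' 0 ∈ e' i).card +
        (Finset.univ.filter fun i => v' (Fin.last t) ∈ e' i).card) :
    (Finset.univ.filter fun i => v 0 ∈ e i).card ^ 2 ≤ 3 * t := by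
  obtain ⟨hvinj, heinj, heH, hinc⟩ := hP
  -- rotation step
  have key : ∀ i : Fin t, v 0 ∈ e i →
      (Finset.univ.filter fun j => v 0 ∈ e j).card ≤
      (Finset.univ.filter fun j => v i.castSucc ∈ e j).card := by
    intro i hi
    have hkt : i.1 < t := i.2
    set k := i.1 with hk
    set σ : Fin (t+1) → Fin (t+1) :=
      fun j => if j.1 ≤ k then ⟨k - j.1, by omega⟩ else j with hσdef
    set τ : Fin t → Fin t :=
      fun j => if j.1 < k then ⟨k - 1 - j.1, by omega⟩ else j with hτdef
    have hσval : ∀ j : Fin (t+1), (σ j).1 = if j.1 ≤ k then k - j.1 else j.1 := by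
      intro j; simp only [hσdef]; split <;> rfl
    have hτval : ∀ j : Fin t, (τ j).1 = if j.1 < k then k - 1 - j.1 else j.1 := by
      intro j; simp only [hτdef]; split <;> rfl
    have hσinv : Function.Involutive σ := by
      intro j; apply Fin.ext; rw [hσval (σ j), hσval j]; split_ifs <;> omega
    have hτinv : Function.Involutive τ := by
      intro j; apply Fin.ext; rw [hτval (τ j), hτval j]; split_ifs <;> omega
    have hP' : IsBergePath H t (fun j => v (σ j)) (fun j => e (τ j)) := by
      refine ⟨fun a b hab => hσinv.injective (hvinj hab),
        fun a b hab => hτinv.injective (heinj hab), fun j => heH _, fun j => ?_⟩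
      rcases lt_trichotomy j.1 k with h | h | h
      · have e1 : σ j.castSucc = (τ j).succ := by
          apply Fin.ext
          rw [hσval, Fin.val_succ, hτval, Fin.coe_castSucc]
          split_ifs <;> omega
        have e2 : σ j.succ = (τ j).castSucc := by
          apply Fin.ext
          rw [hσval, Fin.coe_castSucc, hτval, Fin.val_succ]
          split_ifs <;> omega
        refine ⟨?_, ?_⟩
        · show v (σ j.castSucc) ∈ e (τ j); rw [e1]; exact (hinc (τ j)).2
        · show v (σ j.succ) ∈ e (τ j); rw [e2]; exact (hinc (τ j)).1
      · have eτ : τ j = j := by apply Fin.ext; rw [hτval]; split_ifs <;> omega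
        have hji : j = i := Fin.ext (by omega)
        have e1 : σ j.castSucc = 0 := by
          apply Fin.ext
          rw [hσval, Fin.coe_castSucc, Fin.val_zero]
          split_ifs <;> omega
        have e2 : σ j.succ = j.succ := by
          apply Fin.ext; rw [hσval, Fin.val_succ]; split_ifs <;> omega
        refine ⟨?_, ?_⟩
        · show v (σ j.castSucc) ∈ e (τ j)
          rw [e1, eτ, hji]; exact hi
        · show v (σ j.succ) ∈ e (τ j)
          rw [e2, eτ]; exact (hinc j).2
      · have eτ : τ j = j := by apply Fin.ext; rw [hτval]; split_ifs <;> omega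
        have e1 : σ j.castSucc = j.castSucc := by
          apply Fin.ext; rw [hσval, Fin.coe_castSucc]
          split_ifs <;> [omega; rfl]
        have e2 : σ j.succ = j.succ := by
          apply Fin.ext; rw [hσval, Fin.val_succ]; split_ifs <;> omega
        exact ⟨by show v (σ j.castSucc) ∈ e (τ j); rw [e1, eτ]; exact (hinc j).1,
          by show v (σ j.succ) ∈ e (τ j); rw [e2, eτ]; exact (hinc j).2⟩
    have hv0 : v (σ 0) = v i.castSucc := by
      congr 1
    have hvlast : v (σ (Fin.last t)) = v (Fin.last t) := by
      congr 1; apply Fin.ext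
      rw [hσval, Fin.val_last]
      split_ifs <;> omega
    have hmin' := hmin _ _ hP'
    have h1 : (Finset.univ.filter fun j => v (σ 0) ∈ e (τ j)).card =
        (Finset.univ.filter fun j => v i.castSucc ∈ e j).card := by
      simp only [hv0]
      exact card_filter_involutive hτinv (fun j => v i.castSucc ∈ e j)
    have h2 : (Finset.univ.filter fun j => v (σ (Fin.last t)) ∈ e (τ j)).card =
        (Finset.univ.filter fun j => v (Fin.last t) ∈ e j).card := by
      simp only [hvlast]
      exact card_filter_involutive hτinv (fun j => v (Fin.last t) ∈ e j)
    rw [h1, h2] at hmin'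
    omega
  -- counting step
  set J := Finset.univ.filter fun i : Fin t => v 0 ∈ e i with hJ
  set S := J.image fun i : Fin t => v i.castSucc with hSdef
  have hS : S.card = J.card := by
    apply Finset.card_image_of_injOn
    intro a _ b _ hab
    exact Fin.castSucc_injective _ (hvinj hab)
  have hlow : ∀ s ∈ S, J.card ≤ (Finset.univ.filter fun j => s ∈ e j).card := by
    intro s hs
    obtain ⟨i, hiJ, rfl⟩ := Finset.mem_image.1 hs
    exact key i (Finset.mem_filter.1 hiJ).2
  have h1 : J.card * J.card ≤ ∑ s ∈ S, (Finset.univ.filter fun j => s ∈ e j).card := by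
    calc J.card * J.card = S.card * J.card := by rw [hS]
    _ = ∑ _s ∈ S, J.card := by rw [Finset.sum_const, smul_eq_mul]
    _ ≤ _ := Finset.sum_le_sum hlow
  have h2 : ∑ s ∈ S, (Finset.univ.filter fun j => s ∈ e j).card ≤ 3 * t := by
    calc ∑ s ∈ S, (Finset.univ.filter fun j => s ∈ e j).card
        = ∑ s ∈ S, ∑ j : Fin t, if s ∈ e j then 1 else 0 :=
          Finset.sum_congr rfl fun s _ => Finset.card_filter _ _
      _ = ∑ j : Fin t, ∑ s ∈ S, if s ∈ e j then 1 else 0 := Finset.sum_comm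
      _ = ∑ j : Fin t, (S.filter fun s => s ∈ e j).card :=
          Finset.sum_congr rfl fun j _ => (Finset.card_filter _ _).symm
      _ ≤ ∑ _j : Fin t, 3 := by
          apply Finset.sum_le_sum
          intro j _
          have hsub : S.filter (fun s => s ∈ e j) ⊆ e j := fun x hx => (Finset.mem_filter.1 hx).2
          calc (S.filter fun s => s ∈ e j).card ≤ (e j).card := Finset.card_le_card hsub
          _ = 3 := hunif _ (heH j)
      _ = 3 * t := by simp [Finset.card_univ, mul_comm]
  calc J.card ^ 2 = J.card * J.card := sq J.card
  _ ≤ 3 * t := le_trans h1 h2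

/-- In a 3-uniform hypergraph, if `P` is a longest Berge-path which, among all longest
Berge-paths, minimizes `x₁ + x_ℓ` (the numbers of defining hyperedges incident to its
two endpoints), then `x₁ ≤ √(3(ℓ-1))` and `x_ℓ ≤ √(3(ℓ-1))`. -/
theorem endpoint_degree_bound {V : Type*} [Fintype V] [DecidableEq V]
    (H : Finset (Finset V)) (ℓ : ℕ) (hℓ : 2 ≤ ℓ)
    (hunif : ∀ h ∈ H, h.card = 3)
    (v : Fin (ℓ - 1 + 1) → V) (e : Fin (ℓ - 1) → Finset V)
    (hP : IsBergePath H (ℓ - 1) v e)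
    (hmax : ∀ s, HasBergePath H s → s ≤ ℓ - 1)
    (hmin : ∀ (v' : Fin (ℓ - 1 + 1) → V) (e' : Fin (ℓ - 1) → Finset V),
      IsBergePath H (ℓ - 1) v' e' →
        ((Finset.univ : Finset (Fin (ℓ - 1))).filter (fun i => v 0 ∈ e i)).card +
          ((Finset.univ : Finset (Fin (ℓ - 1))).filter
            (fun i => v (Fin.last (ℓ - 1)) ∈ e i)).card ≤
        ((Finset.univ : Finset (Fin (ℓ - 1))).filter (fun i => v' 0 ∈ e' i)).card +
          ((Finset.univ : Finset (Fin (ℓ - 1))).filter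
            (fun i => v' (Fin.last (ℓ - 1)) ∈ e' i)).card) :
    ((((Finset.univ : Finset (Fin (ℓ - 1))).filter (fun i => v 0 ∈ e i)).card : ℝ) ≤
        Real.sqrt (3 * ((ℓ - 1 : ℕ) : ℝ))) ∧
      ((((Finset.univ : Finset (Fin (ℓ - 1))).filter
          (fun i => v (Fin.last (ℓ - 1)) ∈ e i)).card : ℝ) ≤
        Real.sqrt (3 * ((ℓ - 1 : ℕ) : ℝ))) := by
  obtain ⟨hvinj, heinj, heH, hinc⟩ := hP
  have hP0 : IsBergePath H (ℓ - 1) v e := ⟨hvinj, heinj, heH, hinc⟩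
  -- reversed path
  have hrevinv : Function.Involutive (Fin.rev : Fin (ℓ-1) → Fin (ℓ-1)) := fun i => Fin.rev_rev i
  have hrevinv' : Function.Involutive (Fin.rev : Fin (ℓ-1+1) → Fin (ℓ-1+1)) :=
    fun i => Fin.rev_rev i
  have hPR : IsBergePath H (ℓ-1) (fun j => v j.rev) (fun j => e j.rev) := by
    refine ⟨fun a b hab => hrevinv'.injective (hvinj hab),
      fun a b hab => hrevinv.injective (heinj hab), fun j => heH _, fun j => ?_⟩
    have e1 : (j.castSucc).rev = (j.rev).succ := by
      apply Fin.ext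
      rw [Fin.val_rev, Fin.val_succ, Fin.val_rev, Fin.coe_castSucc]
      omega
    have e2 : (j.succ).rev = (j.rev).castSucc := by
      apply Fin.ext
      rw [Fin.val_rev, Fin.coe_castSucc, Fin.val_rev, Fin.val_succ]
      omega
    exact ⟨by show v (j.castSucc).rev ∈ e j.rev; rw [e1]; exact (hinc j.rev).2,
      by show v (j.succ).rev ∈ e j.rev; rw [e2]; exact (hinc j.rev).1⟩
  have hr0 : v (Fin.rev (0 : Fin (ℓ-1+1))) = v (Fin.last (ℓ-1)) := by
    congr 1
  have hrlast : v (Fin.rev (Fin.last (ℓ-1))) = v 0 := by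
    congr 1
    apply Fin.ext
    rw [Fin.val_rev, Fin.val_last, Fin.val_zero]
    omega
  have hdrev : ∀ x : V, (Finset.univ.filter fun j : Fin (ℓ-1) => x ∈ e j.rev).card =
      (Finset.univ.filter fun j => x ∈ e j).card :=
    fun x => card_filter_involutive hrevinv (fun j => x ∈ e j)
  have hA : (Finset.univ.filter fun i : Fin (ℓ-1) => v (Fin.rev (0 : Fin (ℓ-1+1))) ∈ e i.rev).card
      = (Finset.univ.filter fun i => v (Fin.last (ℓ-1)) ∈ e i).card := by
    rw [hr0]; exact hdrev _
  have hB : (Finset.univ.filter fun i : Fin (ℓ-1) =>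
        v (Fin.rev (Fin.last (ℓ-1))) ∈ e i.rev).card
      = (Finset.univ.filter fun i => v 0 ∈ e i).card := by
    rw [hrlast]; exact hdrev _
  have hminR : ∀ (v' : Fin (ℓ-1+1) → V) (e' : Fin (ℓ-1) → Finset V),
      IsBergePath H (ℓ-1) v' e' →
      (Finset.univ.filter fun i : Fin (ℓ-1) =>
          v (Fin.rev (0 : Fin (ℓ-1+1))) ∈ e i.rev).card +
        (Finset.univ.filter fun i : Fin (ℓ-1) =>
          v (Fin.rev (Fin.last (ℓ-1))) ∈ e i.rev).card ≤
      (Finset.univ.filter fun i => v' 0 ∈ e' i).card +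
        (Finset.univ.filter fun i => v' (Fin.last (ℓ-1)) ∈ e' i).card := by
    intro v' e' h'
    have := hmin v' e' h'
    rw [hA, hB]
    omega
  have hb1 := aux_bound H (ℓ-1) hunif v e hP0 hmin
  have hb2 := aux_bound H (ℓ-1) hunif _ _ hPR hminR
  rw [hA] at hb2
  have conv : ∀ X : ℕ, X ^ 2 ≤ 3 * (ℓ-1) → (X : ℝ) ≤ Real.sqrt (3 * ((ℓ - 1 : ℕ) : ℝ)) := by
    intro X hX
    have h1 : ((X : ℝ)) ^ 2 ≤ 3 * ((ℓ - 1 : ℕ) : ℝ) := by exact_mod_cast hX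
    calc (X : ℝ) = Real.sqrt ((X : ℝ) ^ 2) := (Real.sqrt_sq (by positivity)).symm
    _ ≤ Real.sqrt (3 * ((ℓ - 1 : ℕ) : ℝ)) := Real.sqrt_le_sqrt h1
  exact ⟨conv _ hb1, conv _ hb2⟩
end

section
/- Let k ≥ 2 and n ≥ k. The r-uniform hypergraph H_{n,⌊(k-1)/2⌋} (with t = 0 blocks B_i) contains no Berge-path of length k when k is odd, and H_{n,⌊(k-1)/2⌋,2} contains no Berge-path of length k when k is even. -/
/-- The hypergraph `H_{n,a}`: hyperedges are all `r`-subsets of `A` together with all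
sets `{c} ∪ A'` for `c ∉ A` and `A'` an `(r-1)`-subset of `A`. -/
def HnaEdges {V : Type*} [Fintype V] [DecidableEq V] (r : ℕ) (A : Finset V) :
    Finset (Finset V) :=
  A.powersetCard r ∪
    Aᶜ.biUnion (fun c => (A.powersetCard (r - 1)).image (fun A' => insert c A'))

/-- The hypergraph `H_{n,a,2}`: hyperedges are all `r`-subsets of `A ∪ B` (with
`|B| = 2`) together with all sets `{c} ∪ A'` for `c ∉ A ∪ B` and `A'` an
`(r-1)`-subset of `A`. -/
def Hna2Edges {V : Type*} [Fintype V] [DecidableEq V] (r : ℕ) (A B : Finset V) :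
    Finset (Finset V) :=
  (A ∪ B).powersetCard r ∪
    (A ∪ B)ᶜ.biUnion (fun c => (A.powersetCard (r - 1)).image (fun A' => insert c A'))

/-- If `o i → a (i+1)` along `0..k`, then (positions satisfying `o`) ≤ (positions
satisfying `a`) + 1. -/
private lemma core_aux (k : ℕ) (o a : ℕ → Prop) [DecidablePred o] [DecidablePred a]
    (hnext : ∀ i, i < k → o i → a (i+1)) :
    ((Finset.range (k+1)).filter o).card ≤ ((Finset.range (k+1)).filter a).card + 1 := by
  have h1 : ((((Finset.range (k+1)).filter o)).erase k).card ≤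
      ((Finset.range (k+1)).filter a).card := by
    apply Finset.card_le_card_of_injOn (fun i => i + 1)
    · intro i hi
      simp only [Finset.mem_coe, Finset.mem_erase, Finset.mem_filter, Finset.mem_range] at hi
      simp only [Finset.mem_coe, Finset.mem_filter, Finset.mem_range]
      exact ⟨by omega, hnext i (by omega) hi.2.2⟩
    · intro i _ j _ h
      simp only at h
      omega
  by_cases hk : k ∈ (Finset.range (k+1)).filter o
  · have := Finset.card_erase_of_mem hk
    have hpos : 1 ≤ ((Finset.range (k+1)).filter o).card := Finset.card_pos.mpr ⟨k, hk⟩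
    omega
  · rw [Finset.erase_eq_of_notMem hk] at h1
    omega

/-- Sharper bound when there is a position `p` satisfying neither `o` nor `a`. -/
private lemma core_aux2 (k : ℕ) (o a : ℕ → Prop) [DecidablePred o] [DecidablePred a]
    (hnext : ∀ i, i < k → o i → a (i+1))
    (hprev : ∀ i, i < k → o (i+1) → a i)
    (p : ℕ) (hpk : p ≤ k) (hpa : ¬ a p) (hpo : ¬ o p) :
    ((Finset.range (k+1)).filter o).card ≤ ((Finset.range (k+1)).filter a).card := by
  apply Finset.card_le_card_of_injOn (fun i => if i < p then i + 1 else i - 1)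
  · intro i hi
    simp only [Finset.mem_coe, Finset.mem_filter, Finset.mem_range] at hi
    simp only [Finset.mem_coe, Finset.mem_filter, Finset.mem_range]
    have hip : i ≠ p := fun h => hpo (h ▸ hi.2)
    by_cases h : i < p
    · simp only [if_pos h]
      exact ⟨by omega, hnext i (by omega) hi.2⟩
    · simp only [if_neg h]
      have h1 : 1 ≤ i := by omega
      have := hprev (i-1) (by omega)
      rw [Nat.sub_add_cancel h1] at this
      exact ⟨by omega, this hi.2⟩
  · intro i hi j hj hij
    simp only [Finset.coe_filter, Finset.mem_range, Set.mem_setOf_eq] at hi hj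
    have hip : i ≠ p := fun h => hpo (h ▸ hi.2)
    have hjp : j ≠ p := fun h => hpo (h ▸ hj.2)
    simp only at hij
    by_cases h1 : i < p <;> by_cases h2 : j < p
    · simp only [if_pos h1, if_pos h2] at hij; omega
    · simp only [if_pos h1, if_neg h2] at hij
      have ha1 : a (i+1) := hnext i (by omega) hi.2
      have hne1 : i + 1 ≠ p := fun h => hpa (h ▸ ha1)
      have hj1 : 1 ≤ j := by omega
      have ha2 := hprev (j-1) (by omega)
      rw [Nat.sub_add_cancel hj1] at ha2
      have hne2 : j - 1 ≠ p := fun h => hpa (h ▸ ha2 hj.2)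
      omega
    · simp only [if_neg h1, if_pos h2] at hij
      have ha1 : a (j+1) := hnext j (by omega) hj.2
      have hne1 : j + 1 ≠ p := fun h => hpa (h ▸ ha1)
      have hi1 : 1 ≤ i := by omega
      have ha2 := hprev (i-1) (by omega)
      rw [Nat.sub_add_cancel hi1] at ha2
      have hne2 : i - 1 ≠ p := fun h => hpa (h ▸ ha2 hi.2)
      omega
    · simp only [if_neg h1, if_neg h2] at hij; omega

/-- Key lemma: if every hyperedge containing a vertex outside `S` is contained in
`{x} ∪ A`, then a Berge path of length `k` forces `k + 1 ≤ 2|A| + max 1 |S \ A|`. -/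
private lemma key_lemma {V : Type*} [DecidableEq V] (H : Finset (Finset V)) (k : ℕ)
    (A S : Finset V) (hAS : A ⊆ S)
    (hprop : ∀ f ∈ H, ∀ x ∈ f, x ∉ S → f ⊆ insert x A)
    (hbp : HasBergePath H k) :
    k + 1 ≤ 2 * A.card + max 1 (S \ A).card := by
  obtain ⟨v, e, hv, he, hmem, hinc⟩ := hbp
  set v' : ℕ → V := fun i => v ⟨i % (k+1), Nat.mod_lt _ (Nat.succ_pos k)⟩ with hv'
  have hinj : ∀ i j, i < k+1 → j < k+1 → v' i = v' j → i = j := by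
    intro i j hi hj h
    have h2 := congrArg Fin.val (hv h)
    simp only [Nat.mod_eq_of_lt hi, Nat.mod_eq_of_lt hj] at h2
    exact h2
  have hends : ∀ i (hik : i < k),
      v' i ∈ e ⟨i, hik⟩ ∧ v' (i+1) ∈ e ⟨i, hik⟩ := by
    intro i hik
    have h1 := hinc ⟨i, hik⟩
    have hc : v (Fin.castSucc ⟨i, hik⟩) = v' i := by
      simp only [hv']
      congr 1
      ext
      simp [Fin.castSucc, Nat.mod_eq_of_lt (by omega : i < k+1)]
    have hs : v (Fin.succ ⟨i, hik⟩) = v' (i+1) := by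
      simp only [hv']
      congr 1
      ext
      simp [Fin.succ, Nat.mod_eq_of_lt (by omega : i+1 < k+1)]
    exact ⟨hc ▸ h1.1, hs ▸ h1.2⟩
  have hnext : ∀ i, i < k → v' i ∉ S → v' (i+1) ∈ A := by
    intro i hik ho
    have h1 := hends i hik
    have hsub := hprop _ (hmem ⟨i, hik⟩) (v' i) h1.1 ho
    rcases Finset.mem_insert.mp (hsub h1.2) with h | h
    · exact absurd (hinj _ _ (by omega) (by omega) h) (by omega)
    · exact h
  have hprev : ∀ i, i < k → v' (i+1) ∉ S → v' i ∈ A := by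
    intro i hik ho
    have h1 := hends i hik
    have hsub := hprop _ (hmem ⟨i, hik⟩) (v' (i+1)) h1.2 ho
    rcases Finset.mem_insert.mp (hsub h1.1) with h | h
    · exact absurd (hinj _ _ (by omega) (by omega) h) (by omega)
    · exact h
  classical
  have hcards : ((Finset.range (k+1)).filter (fun i => v' i ∈ A)).card
      + ((Finset.range (k+1)).filter (fun i => v' i ∈ S \ A)).card
      + ((Finset.range (k+1)).filter (fun i => v' i ∉ S)).card = k + 1 := by
    have h1 := Finset.card_filter_add_card_filter_not
      (s := Finset.range (k+1)) (p := fun i => v' i ∈ S)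
    have h2 : (Finset.range (k+1)).filter (fun i => v' i ∈ S) =
        ((Finset.range (k+1)).filter (fun i => v' i ∈ A)) ∪
          ((Finset.range (k+1)).filter (fun i => v' i ∈ S \ A)) := by
      ext i
      simp only [Finset.mem_filter, Finset.mem_union, Finset.mem_sdiff]
      constructor
      · rintro ⟨hi, hiS⟩
        by_cases hA : v' i ∈ A
        · exact Or.inl ⟨hi, hA⟩
        · exact Or.inr ⟨hi, hiS, hA⟩
      · rintro (⟨hi, hA⟩ | ⟨hi, hS, _⟩)
        · exact ⟨hi, hAS hA⟩
        · exact ⟨hi, hS⟩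
    have hd : Disjoint ((Finset.range (k+1)).filter (fun i => v' i ∈ A))
        ((Finset.range (k+1)).filter (fun i => v' i ∈ S \ A)) := by
      rw [Finset.disjoint_left]
      intro x hx hx'
      simp only [Finset.mem_filter, Finset.mem_sdiff] at hx hx'
      exact hx'.2.2 hx.2
    rw [h2, Finset.card_union_of_disjoint hd, Finset.card_range] at h1
    omega
  have hAfcard : ((Finset.range (k+1)).filter (fun i => v' i ∈ A)).card ≤ A.card := by
    apply Finset.card_le_card_of_injOn v'
    · intro i hi
      simp only [Finset.mem_coe, Finset.mem_filter] at hi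
      exact hi.2
    · intro i hi j hj h
      simp only [Finset.coe_filter, Finset.mem_range, Set.mem_setOf_eq] at hi hj
      exact hinj _ _ hi.1 hj.1 h
  by_cases hBe : (Finset.range (k+1)).filter (fun i => v' i ∈ S \ A) = ∅
  · have hOA := core_aux k (fun i => v' i ∉ S) (fun i => v' i ∈ A) hnext
    rw [hBe] at hcards
    simp only [Finset.card_empty] at hcards
    have hmax : 1 ≤ max 1 (S \ A).card := le_max_left _ _
    omega
  · obtain ⟨p, hp⟩ := Finset.nonempty_of_ne_empty hBe
    simp only [Finset.mem_filter, Finset.mem_range, Finset.mem_sdiff] at hp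
    have hOA := core_aux2 k (fun i => v' i ∉ S) (fun i => v' i ∈ A) hnext hprev p
      (by omega) hp.2.2 (by simp only [not_not]; exact hp.2.1)
    have hBfcard : ((Finset.range (k+1)).filter (fun i => v' i ∈ S \ A)).card ≤
        (S \ A).card := by
      apply Finset.card_le_card_of_injOn v'
      · intro i hi
        simp only [Finset.mem_coe, Finset.mem_filter] at hi
        exact hi.2
      · intro i hi j hj h
        simp only [Finset.coe_filter, Finset.mem_range, Set.mem_setOf_eq] at hi hj
        exact hinj _ _ hi.1 hj.1 h
    have hmax : (S \ A).card ≤ max 1 (S \ A).card := le_max_right _ _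
    omega

private lemma prop1 {V : Type*} [Fintype V] [DecidableEq V] (r : ℕ) (A : Finset V) :
    ∀ f ∈ HnaEdges r A, ∀ x ∈ f, x ∉ A → f ⊆ insert x A := by
  intro f hf x hx hxA
  simp only [HnaEdges, Finset.mem_union, Finset.mem_biUnion, Finset.mem_powersetCard,
    Finset.mem_image, Finset.mem_compl] at hf
  rcases hf with ⟨hsub, _⟩ | ⟨c, hc, A', ⟨hA'sub, _⟩, rfl⟩
  · exact absurd (hsub hx) hxA
  · have hxc : x = c := by
      rcases Finset.mem_insert.mp hx with h | h
      · exact h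
      · exact absurd (hA'sub h) hxA
    subst hxc
    exact Finset.insert_subset_insert _ hA'sub

private lemma prop2 {V : Type*} [Fintype V] [DecidableEq V] (r : ℕ) (A B : Finset V) :
    ∀ f ∈ Hna2Edges r A B, ∀ x ∈ f, x ∉ A ∪ B → f ⊆ insert x A := by
  intro f hf x hx hxS
  simp only [Hna2Edges, Finset.mem_union, Finset.mem_biUnion, Finset.mem_powersetCard,
    Finset.mem_image, Finset.mem_compl] at hf
  rcases hf with ⟨hsub, _⟩ | ⟨c, hc, A', ⟨hA'sub, _⟩, rfl⟩
  · exact absurd (hsub hx) (by simpa using hxS)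
  · have hxc : x = c := by
      rcases Finset.mem_insert.mp hx with h | h
      · exact h
      · exact absurd (Finset.mem_union_left B (hA'sub h)) (by simpa using hxS)
    subst hxc
    exact Finset.insert_subset_insert _ hA'sub

/-- For `k ≥ 2` and `n ≥ k`: if `k` is odd then `H_{n,⌊(k-1)/2⌋}` contains no
Berge-path of length `k`, and if `k` is even then `H_{n,⌊(k-1)/2⌋,2}` contains no
Berge-path of length `k`. -/
theorem Hna_no_long_bergePath {V : Type*} [Fintype V] [DecidableEq V]
    (n k r : ℕ) (hk : 2 ≤ k) (hkn : k ≤ n) (hr : 2 ≤ r)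
    (hcard : Fintype.card V = n)
    (A B : Finset V) (hA : A.card = (k - 1) / 2) (hB : B.card = 2)
    (hAB : Disjoint A B) :
    (Odd k → ¬ HasBergePath (HnaEdges r A) k) ∧
      (Even k → ¬ HasBergePath (Hna2Edges r A B) k) := by
  constructor
  · intro hodd hbp
    have h := key_lemma (HnaEdges r A) k A A (subset_refl A) (prop1 r A) hbp
    rw [Finset.sdiff_self] at h
    simp only [Finset.card_empty] at h
    obtain ⟨m, hm⟩ := hodd
    omega
  · intro heven hbp
    have h := key_lemma (Hna2Edges r A B) k A (A ∪ B) Finset.subset_union_left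
      (prop2 r A B) hbp
    have hsd : (A ∪ B) \ A = B := by
      ext x
      simp only [Finset.mem_sdiff, Finset.mem_union]
      constructor
      · rintro ⟨h1 | h1, h2⟩
        · exact absurd h1 h2
        · exact h1
      · intro hx
        exact ⟨Or.inr hx, fun hxA => Finset.disjoint_left.mp hAB hxA hx⟩
    rw [hsd, hB] at h
    obtain ⟨m, hm⟩ := heven
    omega
end
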